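/- arXiv:1703.02827 — 3 statements merged into one kernel-verified Lean document; each statement's English description precedes it below -/
import Mathlib

section
/- Let J ⊆ I be saturated homogeneous ideals of R = K[x,y,z] defining closed subschemes of P^2, where I is the radical ideal of t = d(d+1)/2 distinct reduced points. If J has a minimal free resolution of the form 0 → R^d(-d-1) → R^{d+1}(-d) → J → 0, then J = I. -/
open MvPolynomial

section SymbolicPower
variable {R : Type*} [CommRing R]

/-- The multiplicative set `U = R \ ⋃ P ∈ Ass(R/I), P`. -/
def assComplement (I : Ideal R) : Submonoid R where
  carrier := {x | ∀ P ∈ associatedPrimes R (R ⧸ I), x ∉ P}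
  one_mem' := fun P hP => (Ideal.ne_top_iff_one P).mp hP.1.ne_top
  mul_mem' := by
    intro a b ha hb P hP hab
    rcases hP.1.mem_or_mem hab with h | h
    · exact ha P hP h
    · exact hb P hP h

/-- The `m`-th symbolic power `I^(m) = R ∩ I^m R_U`. -/
def symbolicPower (I : Ideal R) (m : ℕ) : Ideal R :=
  Ideal.comap (algebraMap R (Localization (assComplement I)))
    (Ideal.map (algebraMap R (Localization (assComplement I))) (I ^ m))

/-- The resurgence `ρ(I) = sup { m/r : I^(m) ⊄ I^r }`. -/
noncomputable def resurgence (I : Ideal R) : ℝ :=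
  sSup {x : ℝ | ∃ m r : ℕ, 0 < m ∧ 0 < r ∧ ¬ symbolicPower I m ≤ I ^ r ∧ x = (m : ℝ) / r}

end SymbolicPower

section Poly
variable {K : Type*} [Field K] {n : ℕ}

attribute [local instance] MvPolynomial.gradedAlgebra

/-- The initial degree `α(I)`: the least degree of a nonzero element of `I`. -/
noncomputable def initDeg (I : Ideal (MvPolynomial (Fin n) K)) : ℕ :=
  sInf {t | ∃ f ∈ I, f ≠ 0 ∧ MvPolynomial.totalDegree f = t}

/-- The Waldschmidt constant `α̂(I) = inf_{m ≥ 1} α(I^(m))/m`. -/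
noncomputable def waldschmidt (I : Ideal (MvPolynomial (Fin n) K)) : ℝ :=
  ⨅ m : ℕ+, (initDeg (symbolicPower I m) : ℝ) / (m : ℝ)

/-- The vanishing (saturated radical) ideal of the projective point with homogeneous
coordinates `p`: all polynomials vanishing on the line spanned by `p`. -/
noncomputable def pointIdeal (p : Fin n → K) : Ideal (MvPolynomial (Fin n) K) :=
  ⨅ t : K, RingHom.ker (MvPolynomial.eval (t • p) : MvPolynomial (Fin n) K →+* K)

/-- An ideal is homogeneous w.r.t. the standard grading. -/
def IsHomogeneousIdeal (I : Ideal (MvPolynomial (Fin n) K)) : Prop :=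
  Ideal.IsHomogeneous (homogeneousSubmodule (Fin n) K) I

/-- Two coordinate vectors represent the same projective point. -/
def ProjEq (u v : Fin n → K) : Prop := ∃ c : K, c ≠ 0 ∧ u = c • v

/-- A homogeneous ideal is saturated (w.r.t. the irrelevant maximal ideal). -/
def IsSaturatedIdeal (J : Ideal (MvPolynomial (Fin n) K)) : Prop :=
  ∀ f, (∀ i, MvPolynomial.X i * f ∈ J) → f ∈ J

/-- The Hilbert function `t ↦ dim_K (R/J)_t` of a homogeneous ideal `J`. -/
noncomputable def hilbFun (J : Ideal (MvPolynomial (Fin n) K)) (t : ℕ) : ℕ :=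
  Module.finrank K ((homogeneousSubmodule (Fin n) K t).map
    (Ideal.Quotient.mkₐ K J).toLinearMap)

/-- `I` is minimally generated by `k` forms of degree `δ`. -/
def MinimallyGeneratedBy (I : Ideal (MvPolynomial (Fin n) K)) (k δ : ℕ) : Prop :=
  ∃ g : Fin k → MvPolynomial (Fin n) K,
    (∀ i, (g i).IsHomogeneous δ ∧ g i ≠ 0) ∧
    Ideal.span (Set.range g) = I ∧
    ∀ i, g i ∉ Ideal.span (g '' {j | j ≠ i})

/-- `IsMinFreeRes I e0 e1 e2 g A B` : the data of a graded minimal free resolution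
`0 → ⊕_k R(-e2 k) -B→ ⊕_j R(-e1 j) -A→ ⊕_i R(-e0 i) → I → 0` of `I`. -/
def IsMinFreeRes (I : Ideal (MvPolynomial (Fin n) K)) {n0 n1 n2 : ℕ}
    (e0 : Fin n0 → ℕ) (e1 : Fin n1 → ℕ) (e2 : Fin n2 → ℕ)
    (g : Fin n0 → MvPolynomial (Fin n) K)
    (A : Matrix (Fin n0) (Fin n1) (MvPolynomial (Fin n) K))
    (B : Matrix (Fin n1) (Fin n2) (MvPolynomial (Fin n) K)) : Prop :=
  (∀ i, (g i).IsHomogeneous (e0 i) ∧ g i ≠ 0) ∧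
  Ideal.span (Set.range g) = I ∧
  (∀ i j, (A i j).IsHomogeneous (e1 j - e0 i) ∧ (e1 j ≤ e0 i → A i j = 0)) ∧
  (∀ j k, (B j k).IsHomogeneous (e2 k - e1 j) ∧ (e2 k ≤ e1 j → B j k = 0)) ∧
  Function.Injective (Matrix.toLin' B) ∧
  LinearMap.range (Matrix.toLin' B) = LinearMap.ker (Matrix.toLin' A) ∧
  LinearMap.range (Matrix.toLin' A) =
    LinearMap.ker (Fintype.linearCombination (MvPolynomial (Fin n) K) g)

/-- The Castelnuovo–Mumford regularity of `I` is `r`: the minimal graded free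
resolution of `I` satisfies `max_j (f_j - j) = r`. -/
def HasReg (I : Ideal (MvPolynomial (Fin n) K)) (r : ℕ) : Prop :=
  ∃ (n0 n1 n2 : ℕ) (e0 : Fin n0 → ℕ) (e1 : Fin n1 → ℕ) (e2 : Fin n2 → ℕ)
    (g : Fin n0 → MvPolynomial (Fin n) K)
    (A : Matrix (Fin n0) (Fin n1) (MvPolynomial (Fin n) K))
    (B : Matrix (Fin n1) (Fin n2) (MvPolynomial (Fin n) K)),
    IsMinFreeRes I e0 e1 e2 g A B ∧
    r = max (Finset.univ.sup e0)
        (max (Finset.univ.sup fun j => e1 j - 1) (Finset.univ.sup fun k => e2 k - 2))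

/-- `I` has the (minimal, linear) free resolution
`0 → R^d(-d-1) → R^{d+1}(-d) → I → 0`. -/
def HasLinearPointsRes (I : Ideal (MvPolynomial (Fin n) K)) (d : ℕ) : Prop :=
  ∃ (g : Fin (d+1) → MvPolynomial (Fin n) K)
    (A : Matrix (Fin (d+1)) (Fin d) (MvPolynomial (Fin n) K)),
    (∀ i, (g i).IsHomogeneous d ∧ g i ≠ 0) ∧
    Ideal.span (Set.range g) = I ∧
    (∀ i j, (A i j).IsHomogeneous 1) ∧
    Function.Injective (Matrix.toLin' A) ∧
    LinearMap.range (Matrix.toLin' A) =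
      LinearMap.ker (Fintype.linearCombination (MvPolynomial (Fin n) K) g)

/-- `I` has a minimal free resolution that is linear, with generators in degree `δ`. -/
def HasLinearResolution (I : Ideal (MvPolynomial (Fin n) K)) (δ : ℕ) : Prop :=
  ∃ (n0 n1 n2 : ℕ) (g : Fin n0 → MvPolynomial (Fin n) K)
    (A : Matrix (Fin n0) (Fin n1) (MvPolynomial (Fin n) K))
    (B : Matrix (Fin n1) (Fin n2) (MvPolynomial (Fin n) K)),
    IsMinFreeRes I (fun _ => δ) (fun _ => δ + 1) (fun _ => δ + 2) g A B

end Poly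

section QSC
variable (K : Type*) [Field K]

/-- A quasi star configuration `Z_d = T_d + S_2(2,d)` in `P^2`:
`d` general lines `L i` (pairwise distinct, no three concurrent), the star
configuration of their pairwise intersection points `p i j`, together with
`d` further distinct points `q i ∈ L i`, disjoint from the star points and
not all collinear. -/
structure QuasiStarConfig (d : ℕ) where
  L : Fin d → MvPolynomial (Fin 3) K
  L_hom : ∀ i, (L i).IsHomogeneous 1
  L_ne : ∀ i, L i ≠ 0
  lines_distinct : ∀ i j, i ≠ j → ¬ ∃ c : K, L i = c • L j
  no_three_concurrent : ∀ i j k : Fin d, i ≠ j → i ≠ k → j ≠ k →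
    ∀ v : Fin 3 → K, v ≠ 0 →
      ¬ (eval v (L i) = 0 ∧ eval v (L j) = 0 ∧ eval v (L k) = 0)
  p : Fin d → Fin d → (Fin 3 → K)
  p_ne : ∀ i j, i ≠ j → p i j ≠ 0
  p_mem : ∀ i j, i ≠ j → eval (p i j) (L i) = 0 ∧ eval (p i j) (L j) = 0
  q : Fin d → (Fin 3 → K)
  q_ne : ∀ i, q i ≠ 0
  q_mem : ∀ i, eval (q i) (L i) = 0
  q_distinct : ∀ i j, i ≠ j → ¬ ProjEq (q i) (q j)
  q_not_star : ∀ i j k, j ≠ k → ¬ ProjEq (q i) (p j k)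
  q_not_collinear : ¬ ∃ M : MvPolynomial (Fin 3) K,
    M.IsHomogeneous 1 ∧ M ≠ 0 ∧ ∀ i, eval (q i) M = 0

end QSC

/-- The defining (radical, saturated) ideal of a quasi star configuration. -/
noncomputable def QuasiStarConfig.ideal {K : Type*} [Field K] {d : ℕ}
    (Z : QuasiStarConfig K d) :
    Ideal (MvPolynomial (Fin 3) K) :=
  (⨅ (i : Fin d) (j : Fin d) (_ : i ≠ j), pointIdeal (Z.p i j)) ⊓
    ⨅ i : Fin d, pointIdeal (Z.q i)

section Aux
open MvPolynomial Finset
variable {K : Type*} [Field K]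

/-- eval of a homogeneous polynomial at a scaled point. -/
lemma eval_smul_homog {f : MvPolynomial (Fin 3) K} {t : ℕ}
    (hf : f.IsHomogeneous t) (c : K) (p : Fin 3 → K) :
    eval (c • p) f = c ^ t * eval p f := by
  conv_lhs => rw [f.as_sum]
  conv_rhs => rw [f.as_sum]
  rw [map_sum, map_sum, Finset.mul_sum]
  refine Finset.sum_congr rfl fun d hd => ?_
  rw [eval_monomial, eval_monomial]
  have hdeg : d.degree = t := by
    have := hf (mem_support_iff.mp hd)
    rw [Finsupp.degree_eq_weight_one]
    exact this
  have : (d.prod fun i e => (c • p) i ^ e) =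
      c ^ t * d.prod fun i e => p i ^ e := by
    rw [Finsupp.prod, Finsupp.prod]
    have : ∀ i ∈ d.support, (c • p) i ^ d i = c ^ d i * p i ^ d i := by
      intro i _
      simp [mul_pow]
    rw [Finset.prod_congr rfl this, Finset.prod_mul_distrib,
      Finset.prod_pow_eq_pow_sum]
    have : ∑ i ∈ d.support, d i = t := hdeg
    rw [this]
  rw [this]; ring

lemma mem_pointIdeal_of_eval_eq_zero {f : MvPolynomial (Fin 3) K} {t : ℕ}
    (hf : f.IsHomogeneous t) {p : Fin 3 → K} (h : eval p f = 0) :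
    f ∈ pointIdeal p := by
  rw [pointIdeal, Ideal.mem_iInf]
  intro c
  rw [RingHom.mem_ker, eval_smul_homog hf c p, h, mul_zero]

lemma eval_eq_zero_of_mem_pointIdeal {f : MvPolynomial (Fin 3) K} {p : Fin 3 → K}
    (h : f ∈ pointIdeal p) : eval p f = 0 := by
  rw [pointIdeal, Ideal.mem_iInf] at h
  have := h 1
  rw [RingHom.mem_ker] at this
  simpa using this

end Aux
section Aux2
open MvPolynomial Finset
variable {K : Type*} [Field K]

/-- homogeneous components of an element of a point ideal stay in the point ideal. -/
lemma homogeneousComponent_mem_pointIdeal [Infinite K] {f : MvPolynomial (Fin 3) K}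
    {p : Fin 3 → K} (h : f ∈ pointIdeal p) (j : ℕ) :
    homogeneousComponent j f ∈ pointIdeal p := by
  apply mem_pointIdeal_of_eval_eq_zero (homogeneousComponent_isHomogeneous j f)
  -- build the univariate polynomial
  set N := f.totalDegree
  set q : Polynomial K := ∑ i ∈ range (N + 1),
    Polynomial.C (eval p (homogeneousComponent i f)) * Polynomial.X ^ i with hq
  have hql : ∀ c : K, q.eval c = eval (c • p) f := by
    intro c
    have hf : f = ∑ i ∈ range (N + 1), homogeneousComponent i f :=
      (sum_homogeneousComponent f).symm
    conv_rhs => rw [hf]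
    rw [map_sum, hq]
    simp only [Polynomial.eval_finset_sum, Polynomial.eval_mul, Polynomial.eval_C,
      Polynomial.eval_pow, Polynomial.eval_X]
    refine Finset.sum_congr rfl fun i _ => ?_
    rw [eval_smul_homog (homogeneousComponent_isHomogeneous i f) c p]
    ring
  have hq0 : q = 0 := by
    apply Polynomial.zero_of_eval_zero
    intro c
    rw [hql c]
    have := (Ideal.mem_iInf.mp h) c
    rwa [RingHom.mem_ker] at this
  have hcoeff : ∀ i, eval p (homogeneousComponent i f) = 0 := by
    intro i
    by_cases hi : i < N + 1
    · have : q.coeff i = eval p (homogeneousComponent i f) := by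
        rw [hq, Polynomial.finset_sum_coeff]
        rw [Finset.sum_eq_single i]
        · simp
        · intro b _ hb
          simp [Polynomial.coeff_C_mul, Polynomial.coeff_X_pow, Ne.symm hb]
        · intro hni
          exact absurd (Finset.mem_range.mpr hi) hni
      rw [← this, hq0, Polynomial.coeff_zero]
    · have : homogeneousComponent i f = 0 :=
        homogeneousComponent_eq_zero i f (by omega)
      rw [this, map_zero]
  exact hcoeff j

/-- a linear form vanishing at `v` but not at `u`, when `u,v` are distinct projective points. -/
lemma exists_linear_separating {u v : Fin 3 → K} (hu : u ≠ 0) (hv : v ≠ 0)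
    (h : ¬ ProjEq u v) :
    ∃ L : MvPolynomial (Fin 3) K, L.IsHomogeneous 1 ∧ eval v L = 0 ∧ eval u L ≠ 0 := by
  obtain ⟨k, hk⟩ : ∃ k, v k ≠ 0 := by
    by_contra hc
    push_neg at hc
    exact hv (funext hc)
  have : ∃ l, v k * u l - v l * u k ≠ 0 := by
    by_contra hc
    push_neg at hc
    have hul : ∀ l, u l = v l * (u k / v k) := by
      intro l
      field_simp
      linear_combination hc l
    apply h
    refine ⟨u k / v k, ?_, funext fun l => by simpa [mul_comm] using hul l⟩
    intro h0
    apply hu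
    funext l
    rw [hul l, h0, mul_zero]
    rfl
  obtain ⟨l, hl⟩ := this
  refine ⟨C (v k) * X l - C (v l) * X k, ?_, ?_, ?_⟩
  · exact ((isHomogeneous_C_mul_X (v k) l).sub (isHomogeneous_C_mul_X (v l) k))
  · simp [mul_comm]
  · simpa [sub_eq_zero] using sub_ne_zero.mp hl

end Aux2
section Aux3
open MvPolynomial Finset
variable {K : Type*} [Field K]

/-- The degree-`t` finsupps on `Fin 3` biject with `Sym (Fin 3) t`. -/
noncomputable def degreeSetEquivSym (t : ℕ) :
    {d : Fin 3 →₀ ℕ | d.degree = t} ≃ Sym (Fin 3) t where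
  toFun d := ⟨Finsupp.toMultiset d.1, by
    rw [Finsupp.card_toMultiset]
    exact d.2⟩
  invFun s := ⟨Multiset.toFinsupp s.1, by
    show (Multiset.toFinsupp s.1).degree = t
    rw [Finsupp.degree_apply]
    simp only [Multiset.toFinsupp_support, Multiset.toFinsupp_apply]
    rw [Multiset.toFinset_sum_count_eq]
    exact s.2⟩
  left_inv d := by
    ext
    simp
  right_inv s := by
    ext
    simp

noncomputable instance degreeSetFintype (t : ℕ) :
    Fintype {d : Fin 3 →₀ ℕ | d.degree = t} :=
  Fintype.ofEquiv _ (degreeSetEquivSym t).symm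

lemma card_degreeSet (t : ℕ) :
    Fintype.card {d : Fin 3 →₀ ℕ | d.degree = t} = (t + 2).choose 2 := by
  rw [Fintype.card_congr (degreeSetEquivSym t), Sym.card_sym_eq_choose]
  have h3 : Fintype.card (Fin 3) = 3 := by simp
  rw [h3]
  have : 3 + t - 1 = t + 2 := by omega
  rw [this]
  have := Nat.choose_symm (n := t + 2) (k := t) (by omega)
  have h2 : t + 2 - t = 2 := by omega
  rw [h2] at this
  exact this.symm

noncomputable instance homogFinite (t : ℕ) :
    FiniteDimensional K (homogeneousSubmodule (Fin 3) K t) := by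
  rw [homogeneousSubmodule_eq_finsupp_supported]
  exact Module.Finite.of_basis
    (basisRestrictSupport K {d : Fin 3 →₀ ℕ | d.degree = t})

lemma finrank_homog (t : ℕ) :
    Module.finrank K (homogeneousSubmodule (Fin 3) K t) = (t + 2).choose 2 := by
  rw [← card_degreeSet t]
  have h := homogeneousSubmodule_eq_finsupp_supported (Fin 3) K t
  rw [h]
  exact Module.finrank_eq_card_basis
    (basisRestrictSupport K {d : Fin 3 →₀ ℕ | d.degree = t})

/-- multiplication by a 1-homogeneous polynomial shifts homogeneous components. -/
lemma homogeneousComponent_one_mul {h w : MvPolynomial (Fin 3) K} (hh : h.IsHomogeneous 1)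
    (s : ℕ) : homogeneousComponent (1 + s) (h * w) = h * homogeneousComponent s w := by
  set N := w.totalDegree
  conv_lhs => rw [← sum_homogeneousComponent w]
  rw [Finset.mul_sum, map_sum]
  have hterm : ∀ k, homogeneousComponent (1 + s) (h * homogeneousComponent k w) =
      if 1 + s = 1 + k then h * homogeneousComponent k w else 0 := by
    intro k
    exact homogeneousComponent_of_mem
      (hh.mul (homogeneousComponent_isHomogeneous k w))
  simp_rw [hterm]
  have hcond : ∀ k, (1 + s = 1 + k) = (k = s) := by
    intro k
    simp only [eq_iff_iff]
    omega
  simp_rw [hcond]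
  rw [Finset.sum_ite_eq' (Finset.range (N + 1))]
  by_cases hs : s ∈ Finset.range (N + 1)
  · rw [if_pos hs]
  · rw [if_neg hs]
    have : homogeneousComponent s w = 0 :=
      homogeneousComponent_eq_zero s w (by simp at hs; omega)
    rw [this, mul_zero]

/-- the arithmetic identity behind the Hilbert function computation. -/
lemma choose_identity (d s : ℕ) :
    (d + 1) * ((s + 2).choose 2) + (d + 1).choose 2
      = (s + d + 2).choose 2 + d * ((s + 1).choose 2) := by
  have key : ∀ k : ℕ, 2 * (k.choose 2) = k * (k - 1) := by
    intro k
    induction k with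
    | zero => simp
    | succ n ih =>
      rw [Nat.choose_succ_succ]
      have : n.choose 1 = n := Nat.choose_one_right n
      rw [Nat.mul_add, ih, this]
      rcases n with _ | n
      · simp
      · simp only [Nat.add_sub_cancel]
        ring
  have h1 := key (s + 2)
  have h2 := key (d + 1)
  have h3 := key (s + d + 2)
  have h4 := key (s + 1)
  have e1 : s + 2 - 1 = s + 1 := by omega
  have e2 : d + 1 - 1 = d := by omega
  have e3 : s + d + 2 - 1 = s + d + 1 := by omega
  have e4 : s + 1 - 1 = s := by omega
  rw [e1] at h1; rw [e2] at h2; rw [e3] at h3; rw [e4] at h4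
  suffices h : 2 * ((d + 1) * ((s + 2).choose 2) + (d + 1).choose 2)
      = 2 * ((s + d + 2).choose 2 + d * ((s + 1).choose 2)) by omega
  zify at h1 h2 h3 h4 ⊢
  linear_combination (d + 1 : ℤ) * h1 + h2 - h3 - d * h4

end Aux3
section Aux4
open MvPolynomial Finset
variable {K : Type*} [Field K]

/-- evaluation at the points `p i`, as a linear map on the degree-`t` graded piece. -/
noncomputable def evMap {m : ℕ} (p : Fin m → Fin 3 → K) (t : ℕ) :
    homogeneousSubmodule (Fin 3) K t →ₗ[K] (Fin m → K) where
  toFun f := fun i => eval (p i) f.1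
  map_add' f g := by funext i; simp
  map_smul' c f := by
    funext i
    simp only [Submodule.coe_smul, RingHom.id_apply, Pi.smul_apply, smul_eq_mul,
      smul_eq_C_mul, map_mul, eval_C]

lemma exists_separator {m : ℕ} (p : Fin m → Fin 3 → K) (hp : ∀ i, p i ≠ 0)
    (hdist : ∀ i j, i ≠ j → ¬ ProjEq (p i) (p j)) {t : ℕ} (ht : m ≤ t + 1) (i : Fin m) :
    ∃ f : MvPolynomial (Fin 3) K, f.IsHomogeneous t ∧ eval (p i) f ≠ 0 ∧
      ∀ j, j ≠ i → eval (p j) f = 0 := by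
  classical
  obtain ⟨k, hk⟩ : ∃ k, p i k ≠ 0 := by
    by_contra hc
    push_neg at hc
    exact hp i (funext hc)
  have hL : ∀ j : Fin m, ∃ L : MvPolynomial (Fin 3) K,
      L.IsHomogeneous 1 ∧ eval (p i) L ≠ 0 ∧ (j ≠ i → eval (p j) L = 0) := by
    intro j
    by_cases hj : j = i
    · exact ⟨X k, isHomogeneous_X K k, by simpa using hk, fun h => absurd hj h⟩
    · obtain ⟨L, h1, h2, h3⟩ :=
        exists_linear_separating (hp i) (hp j) (hdist i j (Ne.symm hj))
      exact ⟨L, h1, h3, fun _ => h2⟩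
  choose L hL1 hL2 hL3 using hL
  refine ⟨(∏ j ∈ univ.erase i, L j) * X k ^ (t - (m - 1)), ?_, ?_, ?_⟩
  · have hprod : (∏ j ∈ univ.erase i, L j).IsHomogeneous (m - 1) := by
      have := MvPolynomial.IsHomogeneous.prod (univ.erase i) L (fun _ => 1)
        (fun j _ => hL1 j)
      have hcard : ∑ _j ∈ univ.erase i, 1 = m - 1 := by
        rw [Finset.sum_const, smul_eq_mul, mul_one, Finset.card_erase_of_mem (mem_univ i),
          Finset.card_univ, Fintype.card_fin]
      rwa [hcard] at this
    have := hprod.mul (isHomogeneous_X_pow (R := K) k (t - (m - 1)))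
    have he : m - 1 + (t - (m - 1)) = t := by omega
    rwa [he] at this
  · rw [map_mul, map_pow]
    apply mul_ne_zero
    · rw [map_prod]
      exact Finset.prod_ne_zero_iff.mpr fun j _ => hL2 j
    · simpa using pow_ne_zero _ hk
  · intro j hj
    rw [map_mul, map_prod]
    apply mul_eq_zero_of_left
    exact Finset.prod_eq_zero (Finset.mem_erase.mpr ⟨hj, mem_univ j⟩) (hL3 j hj)

lemma evMap_surjective {m : ℕ} (p : Fin m → Fin 3 → K) (hp : ∀ i, p i ≠ 0)
    (hdist : ∀ i j, i ≠ j → ¬ ProjEq (p i) (p j)) {t : ℕ} (ht : m ≤ t + 1) :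
    Function.Surjective (evMap p t) := by
  classical
  intro w
  choose f hf1 hf2 hf3 using fun i => exists_separator p hp hdist ht i
  refine ⟨⟨∑ i, C (w i * (eval (p i) (f i))⁻¹) * f i, ?_⟩, ?_⟩
  · exact Submodule.sum_mem _ fun i _ =>
      mem_homogeneousSubmodule _ _ |>.mpr ((hf1 i).C_mul _)
  · funext j
    show eval (p j) (∑ i, C (w i * (eval (p i) (f i))⁻¹) * f i) = w j
    rw [map_sum]
    rw [Finset.sum_eq_single j]
    · rw [map_mul, eval_C, mul_assoc, inv_mul_cancel₀ (hf2 j), mul_one]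
    · intro b _ hb
      rw [map_mul, hf3 b j (Ne.symm hb), mul_zero]
    · intro hj
      exact absurd (mem_univ j) hj

lemma finrank_ker_evMap {m : ℕ} (p : Fin m → Fin 3 → K) (hp : ∀ i, p i ≠ 0)
    (hdist : ∀ i j, i ≠ j → ¬ ProjEq (p i) (p j)) {t : ℕ} (ht : m ≤ t + 1) :
    Module.finrank K (LinearMap.ker (evMap p t)) + m = (t + 2).choose 2 := by
  have h := LinearMap.finrank_range_add_finrank_ker (evMap p t)
  rw [LinearMap.range_eq_top.mpr (evMap_surjective p hp hdist ht)] at h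
  rw [finrank_top] at h
  rw [finrank_homog] at h
  rw [Module.finrank_pi] at h
  simp only [Fintype.card_fin] at h
  omega

end Aux4
/-- a saturated homogeneous ideal `J ⊆ I` with minimal free resolution
`0 → R^d(-d-1) → R^{d+1}(-d) → J → 0`, where `I` is the radical ideal of `d(d+1)/2`
distinct points of `P^2`, equals `I`. -/
theorem eq_of_linear_points_res {K : Type*} [Field K] [IsAlgClosed K]
    (d : ℕ) (hd : 0 < d)
    (p : Fin (d * (d + 1) / 2) → (Fin 3 → K)) (hp : ∀ i, p i ≠ 0)
    (hdist : ∀ i j, i ≠ j → ¬ ProjEq (p i) (p j))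
    (I J : Ideal (MvPolynomial (Fin 3) K)) (hI : I = ⨅ i, pointIdeal (p i))
    (hJhom : IsHomogeneousIdeal J) (hJsat : IsSaturatedIdeal J)
    (hJI : J ≤ I) (hres : HasLinearPointsRes J d) : J = I := by
  classical
  haveI : Infinite K := inferInstance
  have hm2 : 2 * (d * (d + 1) / 2) = d * (d + 1) := by
    obtain ⟨r, hr⟩ := Nat.even_mul_succ_self d
    omega
  obtain ⟨g, A, hg, hspan, hA, hAinj, hAker⟩ := hres
  set N := d * (d + 1) / 2 + d + 1 with hN
  -- graded pieces of J and I agree in all degrees ≥ N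
  have KEY : ∀ t, N ≤ t → ∀ f : MvPolynomial (Fin 3) K,
      f.IsHomogeneous t → f ∈ I → f ∈ J := by
    intro t ht f hf hfI
    set W := homogeneousSubmodule (Fin 3) K t with hW
    set IT := LinearMap.ker (evMap p t) with hIT
    set JT := Submodule.comap W.subtype (Submodule.restrictScalars K J) with hJT
    have hmemJT : ∀ x : W, x ∈ JT ↔ (x : MvPolynomial (Fin 3) K) ∈ J := by
      intro x
      rw [hJT, Submodule.mem_comap, Submodule.restrictScalars_mem]
      rfl
    have hmemIT : ∀ x : W, x ∈ IT ↔ ∀ i, eval (p i) (x : MvPolynomial (Fin 3) K) = 0 := by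
      intro x
      rw [hIT, LinearMap.mem_ker]
      constructor
      · intro h i
        exact congrFun h i
      · intro h
        funext i
        exact h i
    have hJT_IT : JT ≤ IT := by
      intro x hx
      rw [hmemIT]
      intro i
      apply eval_eq_zero_of_mem_pointIdeal
      have hxI : (x : MvPolynomial (Fin 3) K) ∈ I := hJI ((hmemJT x).mp hx)
      rw [hI] at hxI
      exact Ideal.mem_iInf.mp hxI i
    have hITrank : Module.finrank K IT + d * (d + 1) / 2 = (t + 2).choose 2 :=
      finrank_ker_evMap p hp hdist (by omega)
    set s := t - d with hs
    set s' := t - d - 1 with hs'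
    have hsd : s + d = t := by omega
    have hss' : 1 + s' = s := by omega
    -- the map Φ : (h_i) ↦ ∑ h_i g_i
    let Φ : (Fin (d + 1) → homogeneousSubmodule (Fin 3) K s) →ₗ[K] W :=
      { toFun := fun v => ⟨∑ i, (v i : MvPolynomial (Fin 3) K) * g i, by
          apply Submodule.sum_mem
          intro i _
          have := ((v i).2 : IsHomogeneous _ s).mul (hg i).1
          rwa [hsd] at this⟩
        map_add' := fun v w => by
          apply Subtype.ext
          show (∑ i, ((v i : MvPolynomial (Fin 3) K) + w i) * g i) = _
          simp [add_mul, Finset.sum_add_distrib]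
        map_smul' := fun c v => by
          apply Subtype.ext
          show (∑ i, (c • (v i : MvPolynomial (Fin 3) K)) * g i) = _
          simp [smul_mul_assoc, Finset.smul_sum] }
    -- the map Ψ : (w_j) ↦ (∑_j A i j w_j)_i
    let Ψ : (Fin d → homogeneousSubmodule (Fin 3) K s') →ₗ[K]
        (Fin (d + 1) → homogeneousSubmodule (Fin 3) K s) :=
      { toFun := fun w i => ⟨∑ j, A i j * (w j : MvPolynomial (Fin 3) K), by
          apply Submodule.sum_mem
          intro j _
          have := (hA i j).mul ((w j).2 : IsHomogeneous _ s')
          rwa [hss'] at this⟩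
        map_add' := fun v w => by
          funext i
          apply Subtype.ext
          show (∑ j, A i j * ((v j : MvPolynomial (Fin 3) K) + w j)) = _
          simp [mul_add, Finset.sum_add_distrib]
        map_smul' := fun c v => by
          funext i
          apply Subtype.ext
          show (∑ j, A i j * (c • (v j : MvPolynomial (Fin 3) K))) = _
          simp [mul_smul_comm, Finset.smul_sum] }
    have hrange : LinearMap.range Φ ≤ JT := by
      rintro _ ⟨v, rfl⟩
      rw [hmemJT]
      show (∑ i, (v i : MvPolynomial (Fin 3) K) * g i) ∈ J
      apply Ideal.sum_mem
      intro i _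
      apply J.mul_mem_left
      rw [← hspan]
      exact Ideal.subset_span ⟨i, rfl⟩
    have hker : LinearMap.ker Φ ≤ LinearMap.range Ψ := by
      intro v hv
      have hsum : (∑ i, (v i : MvPolynomial (Fin 3) K) * g i) = 0 := by
        have := LinearMap.mem_ker.mp hv
        exact congrArg Subtype.val this
      have hu : (fun i => (v i : MvPolynomial (Fin 3) K)) ∈
          LinearMap.ker (Fintype.linearCombination (MvPolynomial (Fin 3) K) g) := by
        rw [LinearMap.mem_ker, Fintype.linearCombination_apply]
        simpa [smul_eq_mul] using hsum
      rw [← hAker] at hu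
      obtain ⟨w, hw⟩ := hu
      refine ⟨fun j => ⟨homogeneousComponent s' (w j), homogeneousComponent_mem s' (w j)⟩, ?_⟩
      funext i
      apply Subtype.ext
      show (∑ j, A i j * homogeneousComponent s' (w j)) = (v i : MvPolynomial (Fin 3) K)
      have hw_i : (∑ j, A i j * w j) = (v i : MvPolynomial (Fin 3) K) := by
        have h1 := congrFun hw i
        rw [Matrix.toLin'_apply] at h1
        simpa [Matrix.mulVec, dotProduct] using h1
      have h2 := congrArg (homogeneousComponent s) hw_i
      rw [map_sum] at h2
      have hterm : ∀ j, homogeneousComponent s (A i j * w j)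
          = A i j * homogeneousComponent s' (w j) := by
        intro j
        rw [← hss']
        exact homogeneousComponent_one_mul (hA i j) s'
      rw [Finset.sum_congr rfl (fun j _ => hterm j)] at h2
      rw [homogeneousComponent_of_mem (v i).2, if_pos rfl] at h2
      exact h2
    -- dimension count
    have hΦ := LinearMap.finrank_range_add_finrank_ker Φ
    have hdomΦ : Module.finrank K (Fin (d + 1) → homogeneousSubmodule (Fin 3) K s)
        = (d + 1) * ((s + 2).choose 2) := by
      rw [Module.finrank_pi_fintype]
      simp [finrank_homog]
    have hdomΨ : Module.finrank K (Fin d → homogeneousSubmodule (Fin 3) K s')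
        = d * ((s' + 2).choose 2) := by
      rw [Module.finrank_pi_fintype]
      simp [finrank_homog]
    have hkerΦ : Module.finrank K (LinearMap.ker Φ) ≤ d * ((s' + 2).choose 2) := by
      calc Module.finrank K (LinearMap.ker Φ)
          ≤ Module.finrank K (LinearMap.range Ψ) := Submodule.finrank_mono hker
        _ ≤ Module.finrank K (Fin d → homogeneousSubmodule (Fin 3) K s') :=
            LinearMap.finrank_range_le Ψ
        _ = d * ((s' + 2).choose 2) := hdomΨ
    have hJTrank : Module.finrank K (LinearMap.range Φ) ≤ Module.finrank K JT :=
      Submodule.finrank_mono hrange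
    have hmchoose : (d + 1).choose 2 = d * (d + 1) / 2 := by
      rw [Nat.choose_two_right]
      simp only [Nat.add_sub_cancel]
      rw [Nat.mul_comm]
    have hid := choose_identity d s
    rw [hmchoose] at hid
    have e1 : s + d + 2 = t + 2 := by omega
    have e2 : s + 1 = s' + 2 := by omega
    rw [e1, e2] at hid
    rw [hdomΦ] at hΦ
    have hIJrank : Module.finrank K IT ≤ Module.finrank K JT := by omega
    have hEq : JT = IT := Submodule.eq_of_le_of_finrank_le hJT_IT hIJrank
    have hfIT : (⟨f, hf⟩ : W) ∈ IT := by
      rw [hmemIT]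
      intro i
      apply eval_eq_zero_of_mem_pointIdeal
      rw [hI] at hfI
      exact Ideal.mem_iInf.mp hfI i
    rw [← hEq] at hfIT
    exact (hmemJT _).mp hfIT
  -- saturation: multiplying by all monomials of fixed degree detects membership
  have SAT : ∀ (k : ℕ) (f : MvPolynomial (Fin 3) K),
      (∀ v : Fin k → Fin 3, (∏ i, X (v i)) * f ∈ J) → f ∈ J := by
    intro k
    induction k with
    | zero =>
      intro f hf
      simpa using hf (fun i => i.elim0)
    | succ n ih =>
      intro f hf
      apply ih
      intro v
      apply hJsat
      intro i
      have h1 := hf (Fin.cons i v)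
      rw [Fin.prod_univ_succ] at h1
      simp only [Fin.cons_zero, Fin.cons_succ] at h1
      rwa [mul_assoc] at h1
  -- conclude
  apply le_antisymm hJI
  intro f hfI
  rw [← sum_homogeneousComponent f]
  apply Ideal.sum_mem
  intro c _
  have hcI : homogeneousComponent c f ∈ I := by
    rw [hI, Ideal.mem_iInf]
    intro i
    apply homogeneousComponent_mem_pointIdeal
    rw [hI] at hfI
    exact Ideal.mem_iInf.mp hfI i
  apply SAT N
  intro v
  apply KEY (N + c) (by omega)
  · have hXprod : (∏ i, X (v i) : MvPolynomial (Fin 3) K).IsHomogeneous N := by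
      have h1 := MvPolynomial.IsHomogeneous.prod Finset.univ (fun i => X (v i))
        (fun _ => 1) (fun i _ => isHomogeneous_X K (v i))
      simpa using h1
    exact hXprod.mul (homogeneousComponent_isHomogeneous c f)
  · exact I.mul_mem_left _ hcI
end

section
/- Let d ≥ 10 and let I = I(Z_d) be the ideal of a quasi star configuration. Then the Waldschmidt constant satisfies α̂(I) ≤ (d + √d)/2. -/
open MvPolynomial

section Poly
variable {K : Type*} [Field K] {n : ℕ}

attribute [local instance] MvPolynomial.gradedAlgebra

end Poly

section AuxPoint
open MvPolynomial
variable {K : Type*} [Field K]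

/-- Restriction of a polynomial to the line through `z`. -/
noncomputable def lineHom (z : Fin 3 → K) :
    MvPolynomial (Fin 3) K →+* Polynomial K :=
  MvPolynomial.eval₂Hom (Polynomial.C : K →+* Polynomial K)
    (fun i => Polynomial.C (z i) * Polynomial.X)

lemma lineHom_eval (z : Fin 3 → K) (t : K) (f : MvPolynomial (Fin 3) K) :
    Polynomial.eval t (lineHom z f) = eval (t • z) f := by
  have h : (Polynomial.evalRingHom t).comp (lineHom z) =
      (MvPolynomial.eval ((t • z : Fin 3 → K)) : MvPolynomial (Fin 3) K →+* K) := by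
    apply MvPolynomial.ringHom_ext
    · intro c; simp [lineHom]
    · intro i
      simp only [RingHom.coe_comp, Function.comp_apply, lineHom, coe_eval₂Hom,
        eval₂_X, Polynomial.eval_mul, Polynomial.eval_C, Polynomial.eval_X,
        eval_X, Pi.smul_apply, smul_eq_mul, Polynomial.coe_evalRingHom]
      ring
  exact RingHom.congr_fun h f

lemma mem_pointIdeal_iff {z : Fin 3 → K} {f : MvPolynomial (Fin 3) K} :
    f ∈ pointIdeal z ↔ ∀ t : K, eval (t • z) f = 0 := by
  unfold pointIdeal
  rw [Submodule.mem_iInf]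
  exact forall_congr' fun t => RingHom.mem_ker

lemma pointIdeal_eq_ker [Infinite K] (z : Fin 3 → K) :
    pointIdeal z = RingHom.ker (lineHom z) := by
  ext f
  rw [mem_pointIdeal_iff, RingHom.mem_ker]
  constructor
  · intro h
    apply Polynomial.funext
    intro t
    simp [lineHom_eval, h t]
  · intro h t
    rw [← lineHom_eval, h, Polynomial.eval_zero]

lemma pointIdeal_isPrime [Infinite K] (z : Fin 3 → K) :
    (pointIdeal z).IsPrime := by
  rw [pointIdeal_eq_ker]
  exact RingHom.ker_isPrime _

lemma not_mem_pointIdeal {z : Fin 3 → K} {f : MvPolynomial (Fin 3) K}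
    (h : eval z f ≠ 0) : f ∉ pointIdeal z := by
  intro hf
  exact h (by simpa using (mem_pointIdeal_iff.mp hf 1))

lemma eval_smul_of_isHomogeneous {f : MvPolynomial (Fin 3) K} {n : ℕ}
    (hf : f.IsHomogeneous n) (t : K) (v : Fin 3 → K) :
    eval (t • v) f = t ^ n * eval v f := by
  rw [eval_eq', eval_eq', Finset.mul_sum]
  apply Finset.sum_congr rfl
  intro d hd
  have hdeg : ∑ i, d i = n := by
    have h1 : (Finsupp.weight 1) d = n := hf (mem_support_iff.mp hd)
    have h2 : d.degree = ∑ i, d i := by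
      rw [Finsupp.degree]
      exact Finset.sum_subset (Finset.subset_univ _)
        (fun i _ hi => Finsupp.notMem_support_iff.mp hi)
    rw [← h2, Finsupp.degree_eq_weight_one]; exact h1
  calc coeff d f * ∏ i, (t • v) i ^ d i
      = coeff d f * ∏ i, (t ^ d i * v i ^ d i) := by
        simp [Pi.smul_apply, smul_eq_mul, mul_pow]
    _ = t ^ n * (coeff d f * ∏ i, v i ^ d i) := by
        rw [Finset.prod_mul_distrib, Finset.prod_pow_eq_pow_sum, hdeg]; ring

lemma pointIdeal_smul {z : Fin 3 → K} {c : K} (hc : c ≠ 0) :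
    pointIdeal (c • z) = pointIdeal z := by
  ext f
  simp only [mem_pointIdeal_iff]
  constructor
  · intro h t
    have := h (t / c)
    rwa [smul_smul, div_mul_cancel₀ _ hc] at this
  · intro h t
    rw [smul_smul]
    exact h (t * c)

/-- The linear polynomial associated to a dual functional. -/
noncomputable def dualPoly (g : (Fin 3 → K) →ₗ[K] K) : MvPolynomial (Fin 3) K :=
  ∑ i, MvPolynomial.C (g (fun j => if i = j then 1 else 0)) * MvPolynomial.X i

lemma eval_dualPoly (g : (Fin 3 → K) →ₗ[K] K) (v : Fin 3 → K) :
    eval v (dualPoly g) = g v := by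
  rw [LinearMap.pi_apply_eq_sum_univ g v, dualPoly]
  simp [smul_eq_mul, mul_comm]

lemma dualPoly_mem_pointIdeal {g : (Fin 3 → K) →ₗ[K] K} {x : Fin 3 → K}
    (h : g x = 0) : dualPoly g ∈ pointIdeal x := by
  rw [mem_pointIdeal_iff]
  intro t
  rw [eval_dualPoly, map_smul, h, smul_eq_mul, mul_zero]

lemma exists_linear_sep {x z : Fin 3 → K} (hz : z ∉ Submodule.span K {x}) :
    ∃ ℓ : MvPolynomial (Fin 3) K, ℓ ∈ pointIdeal x ∧ eval z ℓ ≠ 0 := by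
  have hzq : Submodule.Quotient.mk (p := Submodule.span K {x}) z ≠ 0 := by
    simpa [Submodule.Quotient.mk_eq_zero] using hz
  obtain ⟨φ, hφ⟩ : ∃ φ : Module.Dual K ((Fin 3 → K) ⧸ Submodule.span K {x}),
      φ (Submodule.Quotient.mk z) ≠ 0 := by
    by_contra h
    push_neg at h
    exact hzq ((Module.forall_dual_apply_eq_zero_iff K _).mp h)
  refine ⟨dualPoly (φ.comp (Submodule.span K {x}).mkQ), ?_, ?_⟩
  · apply dualPoly_mem_pointIdeal
    have hx0 : (Submodule.Quotient.mk x : (Fin 3 → K) ⧸ Submodule.span K {x}) = 0 :=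
      (Submodule.Quotient.mk_eq_zero _).mpr (Submodule.mem_span_singleton_self x)
    simp [hx0]
  · rw [eval_dualPoly]
    exact hφ

end AuxPoint

section AuxConfig
open MvPolynomial
variable {K : Type*} [Field K] {d : ℕ}

/-- The configuration points of a quasi star configuration. -/
def QuasiStarConfig.IsPt (Z : QuasiStarConfig K d) (x : Fin 3 → K) : Prop :=
  (∃ i j, i ≠ j ∧ x = Z.p i j) ∨ ∃ i, x = Z.q i

lemma QuasiStarConfig.pt_ne_zero (Z : QuasiStarConfig K d) {x} (h : Z.IsPt x) : x ≠ 0 := by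
  rcases h with ⟨i, j, hij, rfl⟩ | ⟨i, rfl⟩
  · exact Z.p_ne i j hij
  · exact Z.q_ne i

lemma QuasiStarConfig.mem_ideal_iff (Z : QuasiStarConfig K d) {f : MvPolynomial (Fin 3) K} :
    f ∈ Z.ideal ↔ ∀ x, Z.IsPt x → f ∈ pointIdeal x := by
  constructor
  · intro hf x hx
    rw [QuasiStarConfig.ideal, Submodule.mem_inf] at hf
    rcases hx with ⟨i, j, hij, rfl⟩ | ⟨i, rfl⟩
    · have h1 := hf.1
      simp only [Submodule.mem_iInf] at h1
      exact h1 i j hij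
    · have h2 := hf.2
      simp only [Submodule.mem_iInf] at h2
      exact h2 i
  · intro h
    rw [QuasiStarConfig.ideal, Submodule.mem_inf]
    constructor
    · simp only [Submodule.mem_iInf]
      intro i j hij
      exact h _ (Or.inl ⟨i, j, hij, rfl⟩)
    · simp only [Submodule.mem_iInf]
      intro i
      exact h _ (Or.inr ⟨i, rfl⟩)

lemma mem_pointIdeal_of_isHomogeneous {f : MvPolynomial (Fin 3) K} {n : ℕ} {z : Fin 3 → K}
    (hf : f.IsHomogeneous n) (h : eval z f = 0) : f ∈ pointIdeal z := by
  rw [mem_pointIdeal_iff]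
  intro t
  rw [eval_smul_of_isHomogeneous hf, h, mul_zero]

/-- For any configuration point `z` there is a form `w`, not vanishing at `z`, such that
`w * f ∈ I(Z)` for every `f` in the ideal of `z`. -/
lemma QuasiStarConfig.exists_sep (Z : QuasiStarConfig K d) {z : Fin 3 → K} (hz : Z.IsPt z) :
    ∃ w : MvPolynomial (Fin 3) K, eval z w ≠ 0 ∧
      ∀ f ∈ pointIdeal z, w * f ∈ Z.ideal := by
  classical
  have hsep : ∀ x : Fin 3 → K, pointIdeal x ≠ pointIdeal z →
      ∃ ℓ, ℓ ∈ pointIdeal x ∧ eval z ℓ ≠ 0 := by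
    intro x hne
    apply exists_linear_sep
    intro hmem
    rw [Submodule.mem_span_singleton] at hmem
    obtain ⟨c, rfl⟩ := hmem
    rcases eq_or_ne c 0 with rfl | hc
    · exact Z.pt_ne_zero hz (zero_smul _ _)
    · exact hne (pointIdeal_smul hc).symm
  let ℓ1 : Fin d × Fin d → MvPolynomial (Fin 3) K := fun ij =>
    if h : pointIdeal (Z.p ij.1 ij.2) ≠ pointIdeal z then (hsep _ h).choose else 1
  let ℓ2 : Fin d → MvPolynomial (Fin 3) K := fun i =>
    if h : pointIdeal (Z.q i) ≠ pointIdeal z then (hsep _ h).choose else 1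
  refine ⟨(∏ ij : Fin d × Fin d, ℓ1 ij) * ∏ i : Fin d, ℓ2 i, ?_, ?_⟩
  · rw [map_mul, map_prod, map_prod]
    apply mul_ne_zero <;> apply Finset.prod_ne_zero_iff.mpr <;> intro k _
    · simp only [ℓ1]
      split_ifs with h
      · exact (hsep _ h).choose_spec.2
      · simp
    · simp only [ℓ2]
      split_ifs with h
      · exact (hsep _ h).choose_spec.2
      · simp
  · intro f hf
    rw [Z.mem_ideal_iff]
    intro x hx
    rcases hx with ⟨i, j, hij, rfl⟩ | ⟨i, rfl⟩
    · by_cases h : pointIdeal (Z.p i j) ≠ pointIdeal z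
      · have hℓ : ℓ1 (i, j) ∈ pointIdeal (Z.p i j) := by
          simp only [ℓ1, dif_pos h]
          exact (hsep _ h).choose_spec.1
        have hdvd : ℓ1 (i, j) ∣ (∏ ij : Fin d × Fin d, ℓ1 ij) * (∏ i : Fin d, ℓ2 i) * f :=
          dvd_mul_of_dvd_left (dvd_mul_of_dvd_left
            (Finset.dvd_prod_of_mem _ (Finset.mem_univ (i, j))) _) _
        obtain ⟨c, hc⟩ := hdvd
        rw [hc]
        exact Ideal.mul_mem_right _ _ hℓ
      · push_neg at h
        rw [h] at *
        exact Ideal.mul_mem_left _ _ hf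
    · by_cases h : pointIdeal (Z.q i) ≠ pointIdeal z
      · have hℓ : ℓ2 i ∈ pointIdeal (Z.q i) := by
          simp only [ℓ2, dif_pos h]
          exact (hsep _ h).choose_spec.1
        have hdvd : ℓ2 i ∣ (∏ ij : Fin d × Fin d, ℓ1 ij) * (∏ i : Fin d, ℓ2 i) * f :=
          dvd_mul_of_dvd_left (dvd_mul_of_dvd_right
            (Finset.dvd_prod_of_mem _ (Finset.mem_univ i)) _) _
        obtain ⟨c, hc⟩ := hdvd
        rw [hc]
        exact Ideal.mul_mem_right _ _ hℓ
      · push_neg at h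
        rw [h] at *
        exact Ideal.mul_mem_left _ _ hf

end AuxConfig


section AuxSymb
open MvPolynomial
variable {K : Type*} [Field K] [Infinite K] {d : ℕ}

lemma QuasiStarConfig.witness_star (Z : QuasiStarConfig K d) (m : ℕ)
    (F : MvPolynomial (Fin 3) K) {i j : Fin d} (hij : i ≠ j) :
    ∃ v : MvPolynomial (Fin 3) K, eval (Z.p i j) v ≠ 0 ∧
      v * (F * (∏ k, Z.L k) ^ m) ∈ Z.ideal ^ (2 * m) := by
  obtain ⟨w, hw0, hw⟩ := Z.exists_sep (Or.inl ⟨i, j, hij, rfl⟩)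
  have hLi : Z.L i ∈ pointIdeal (Z.p i j) :=
    mem_pointIdeal_of_isHomogeneous (Z.L_hom i) (Z.p_mem i j hij).1
  have hLj : Z.L j ∈ pointIdeal (Z.p i j) :=
    mem_pointIdeal_of_isHomogeneous (Z.L_hom j) (Z.p_mem i j hij).2
  refine ⟨w ^ (2 * m), by simpa [map_pow] using pow_ne_zero (2 * m) hw0, ?_⟩
  have hjmem : j ∈ Finset.univ.erase i := Finset.mem_erase.mpr ⟨Ne.symm hij, Finset.mem_univ j⟩
  have hsplit : (∏ k, Z.L k) =
      Z.L i * (Z.L j * ∏ k ∈ (Finset.univ.erase i).erase j, Z.L k) := by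
    rw [← Finset.mul_prod_erase _ _ (Finset.mem_univ i), ← Finset.mul_prod_erase _ _ hjmem]
  have key : w ^ (2 * m) * (F * (∏ k, Z.L k) ^ m) =
      (F * (∏ k ∈ (Finset.univ.erase i).erase j, Z.L k) ^ m) *
        ((w * Z.L i) ^ m * (w * Z.L j) ^ m) := by
    rw [hsplit]; ring
  rw [key, two_mul, pow_add]
  exact Ideal.mul_mem_left _ _
    (Ideal.mul_mem_mul (Ideal.pow_mem_pow (hw _ hLi) m) (Ideal.pow_mem_pow (hw _ hLj) m))

lemma QuasiStarConfig.witness_q (Z : QuasiStarConfig K d) (m : ℕ)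
    (F : MvPolynomial (Fin 3) K) (i : Fin d) (hFq : F ∈ (pointIdeal (Z.q i)) ^ m) :
    ∃ v : MvPolynomial (Fin 3) K, eval (Z.q i) v ≠ 0 ∧
      v * (F * (∏ k, Z.L k) ^ m) ∈ Z.ideal ^ (2 * m) := by
  obtain ⟨w, hw0, hw⟩ := Z.exists_sep (Or.inr ⟨i, rfl⟩)
  have hLi : Z.L i ∈ pointIdeal (Z.q i) :=
    mem_pointIdeal_of_isHomogeneous (Z.L_hom i) (Z.q_mem i)
  have hwF : w ^ m * F ∈ Z.ideal ^ m := by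
    have hle : Ideal.span {w} * pointIdeal (Z.q i) ≤ Z.ideal := by
      rw [Ideal.mul_le]
      intro r hr s hs
      rw [Ideal.mem_span_singleton] at hr
      obtain ⟨c, rfl⟩ := hr
      have h3 := hw s hs
      have h4 : w * c * s = c * (w * s) := by ring
      rw [h4]
      exact Ideal.mul_mem_left _ _ h3
    have h2 : w ^ m * F ∈ (Ideal.span {w} * pointIdeal (Z.q i)) ^ m := by
      rw [mul_pow]
      refine Ideal.mul_mem_mul ?_ hFq
      rw [Ideal.span_singleton_pow]
      exact Ideal.mem_span_singleton_self _
    exact (Ideal.pow_right_mono hle m) h2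
  refine ⟨w ^ (2 * m), by simpa [map_pow] using pow_ne_zero (2 * m) hw0, ?_⟩
  have hsplit : (∏ k, Z.L k) = Z.L i * ∏ k ∈ Finset.univ.erase i, Z.L k :=
    (Finset.mul_prod_erase _ _ (Finset.mem_univ i)).symm
  have key : w ^ (2 * m) * (F * (∏ k, Z.L k) ^ m) =
      ((∏ k ∈ Finset.univ.erase i, Z.L k) ^ m) * ((w ^ m * F) * (w * Z.L i) ^ m) := by
    rw [hsplit]; ring
  rw [key, two_mul, pow_add]
  exact Ideal.mul_mem_left _ _ (Ideal.mul_mem_mul hwF (Ideal.pow_mem_pow (hw _ hLi) m))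

lemma QuasiStarConfig.mul_pow_mem_symbolicPower (Z : QuasiStarConfig K d) (hd : 0 < d)
    (m : ℕ) (F : MvPolynomial (Fin 3) K)
    (hFq : ∀ i, F ∈ (pointIdeal (Z.q i)) ^ m) :
    F * (∏ k, Z.L k) ^ m ∈ symbolicPower Z.ideal (2 * m) := by
  classical
  set g : MvPolynomial (Fin 3) K := F * (∏ k, Z.L k) ^ m with hgdef
  set J : Ideal (MvPolynomial (Fin 3) K) :=
    (Z.ideal ^ (2 * m)).colon (Ideal.span {g}) with hJdef
  -- the index type for prime avoidance
  let f : (Fin d × Fin d) ⊕ Fin d → Ideal (MvPolynomial (Fin 3) K) :=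
    Sum.elim (fun ij => pointIdeal (Z.p ij.1 ij.2)) (fun i => pointIdeal (Z.q i))
  let s : Finset ((Fin d × Fin d) ⊕ Fin d) :=
    ((Finset.univ.filter fun ij : Fin d × Fin d => ij.1 ≠ ij.2).image Sum.inl) ∪
      (Finset.univ.image Sum.inr)
  have i0 : Fin d := ⟨0, hd⟩
  have hp : ∀ k ∈ s, k ≠ Sum.inr i0 → k ≠ Sum.inr i0 → (f k).IsPrime := by
    intro k _ _ _
    cases k with
    | inl ij => exact pointIdeal_isPrime _
    | inr i => exact pointIdeal_isPrime _
  have hnot : ¬ ∃ k ∈ s, J ≤ f k := by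
    rintro ⟨k, hk, hle⟩
    cases k with
    | inl ij =>
      have hij : ij.1 ≠ ij.2 := by
        simp only [s, Finset.mem_union, Finset.mem_image, Finset.mem_filter] at hk
        rcases hk with ⟨a, ⟨_, ha⟩, hak⟩ | ⟨a, _, hak⟩
        · cases hak; exact ha
        · cases hak
      obtain ⟨v, hv0, hv⟩ := Z.witness_star m F hij
      exact not_mem_pointIdeal hv0 (hle (Ideal.mem_colon_span_singleton.mpr hv))
    | inr i =>
      obtain ⟨v, hv0, hv⟩ := Z.witness_q m F i (hFq i)
      exact not_mem_pointIdeal hv0 (hle (Ideal.mem_colon_span_singleton.mpr hv))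
  have hsub : ¬ ((J : Set (MvPolynomial (Fin 3) K)) ⊆ ⋃ k ∈ (s : Set _), f k) := by
    intro hsub
    exact hnot ((Ideal.subset_union_prime (Sum.inr i0) (Sum.inr i0) hp).mp hsub)
  obtain ⟨u, huJ, hunotin⟩ := Set.not_subset.mp hsub
  have hu : ∀ k ∈ s, u ∉ f k := by
    intro k hk hmem
    exact hunotin (Set.mem_biUnion hk hmem)
  -- u avoids all associated primes
  have huU : u ∈ assComplement Z.ideal := by
    intro P hP humem
    obtain ⟨hPprime, x, hx⟩ := hP
    obtain ⟨r, rfl⟩ := Ideal.Quotient.mk_surjective x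
    have hr : r ∉ Z.ideal := by
      intro hrI
      have hx0 : (Ideal.Quotient.mk Z.ideal r) = 0 := Ideal.Quotient.eq_zero_iff_mem.mpr hrI
      rw [hx0] at hx
      apply hPprime.ne_top
      rw [hx, Ideal.radical_eq_top, Submodule.eq_top_iff']
      intro y
      simp [Submodule.mem_colon_singleton]
    obtain ⟨z0, hz0pt, hz0⟩ : ∃ z0, Z.IsPt z0 ∧ r ∉ pointIdeal z0 := by
      by_contra hcon
      push_neg at hcon
      exact hr (Z.mem_ideal_iff.mpr hcon)
    have hPle : P ≤ pointIdeal z0 := by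
      intro y hy
      rw [hx] at hy
      obtain ⟨k, hk⟩ := hy
      have hyann : y ^ k • (Ideal.Quotient.mk Z.ideal r) = 0 :=
        (Submodule.mem_bot _).mp (Submodule.mem_colon_singleton.mp hk)
      have h1 : y ^ k • (Ideal.Quotient.mk Z.ideal r) = Ideal.Quotient.mk Z.ideal (y ^ k * r) := rfl
      have h2 : y ^ k * r ∈ Z.ideal := Ideal.Quotient.eq_zero_iff_mem.mp (h1 ▸ hyann)
      exact (pointIdeal_isPrime z0).mem_of_pow_mem k (((pointIdeal_isPrime z0).mem_or_mem
        (Z.mem_ideal_iff.mp h2 z0 hz0pt)).resolve_right hz0)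
    have : u ∉ pointIdeal z0 := by
      rcases hz0pt with ⟨i, j, hij, rfl⟩ | ⟨i, rfl⟩
      · refine hu (Sum.inl (i, j)) ?_
        simp only [s, Finset.mem_union, Finset.mem_image, Finset.mem_filter]
        exact Or.inl ⟨(i, j), ⟨Finset.mem_univ _, hij⟩, rfl⟩
      · refine hu (Sum.inr i) ?_
        simp only [s, Finset.mem_union, Finset.mem_image]
        exact Or.inr ⟨i, Finset.mem_univ _, rfl⟩
    exact this (hPle humem)
  -- conclude
  have hug : u * g ∈ Z.ideal ^ (2 * m) := Ideal.mem_colon_span_singleton.mp huJ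
  rw [symbolicPower, Ideal.mem_comap]
  have hunit : IsUnit (algebraMap (MvPolynomial (Fin 3) K)
      (Localization (assComplement Z.ideal)) u) :=
    IsLocalization.map_units _ (⟨u, huU⟩ : assComplement Z.ideal)
  obtain ⟨uu, huu⟩ := hunit
  have hmem : ↑uu * algebraMap (MvPolynomial (Fin 3) K) (Localization (assComplement Z.ideal)) g
      ∈ Ideal.map (algebraMap (MvPolynomial (Fin 3) K) (Localization (assComplement Z.ideal)))
        (Z.ideal ^ (2 * m)) := by
    rw [huu, ← map_mul]
    exact Ideal.mem_map_of_mem _ hug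
  have heq : algebraMap (MvPolynomial (Fin 3) K) (Localization (assComplement Z.ideal)) g =
      ↑uu⁻¹ * (↑uu * algebraMap (MvPolynomial (Fin 3) K)
        (Localization (assComplement Z.ideal)) g) :=
    (Units.inv_mul_cancel_left _ _).symm
  rw [heq]
  exact Ideal.mul_mem_left _ _ hmem

end AuxSymb


section AuxSubst
open MvPolynomial
variable {K : Type*} [Field K]

lemma mem_span_X12_pow {m : ℕ} {G : MvPolynomial (Fin 3) K}
    (h : ∀ σ : Fin 3 →₀ ℕ, σ 1 + σ 2 < m → coeff σ G = 0) :
    G ∈ (Ideal.span {X 1, X 2} : Ideal (MvPolynomial (Fin 3) K)) ^ m := by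
  classical
  rw [as_sum G]
  apply Ideal.sum_mem
  intro σ hσ
  have hge : m ≤ σ 1 + σ 2 := not_lt.mp (fun hlt => (mem_support_iff.mp hσ) (h σ hlt))
  have hmono : monomial σ (coeff σ G) =
      C (coeff σ G) * X 0 ^ σ 0 * (X 1 ^ σ 1 * X 2 ^ σ 2) := by
    rw [monomial_eq]
    rw [Finsupp.prod_fintype _ _ (fun i => pow_zero _)]
    rw [Fin.prod_univ_three]
    ring
  rw [hmono]
  apply Ideal.mul_mem_left
  have h1 : (X 1 : MvPolynomial (Fin 3) K) ^ σ 1 * X 2 ^ σ 2 ∈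
      (Ideal.span {X 1, X 2} : Ideal (MvPolynomial (Fin 3) K)) ^ (σ 1 + σ 2) := by
    rw [pow_add]
    exact Ideal.mul_mem_mul
      (Ideal.pow_mem_pow (Ideal.subset_span (by simp)) _)
      (Ideal.pow_mem_pow (Ideal.subset_span (by simp)) _)
  exact Ideal.pow_le_pow_right hge h1

lemma exists_subst (z : Fin 3 → K) (hz : z ≠ 0) :
    ∃ τ : MvPolynomial (Fin 3) K →ₐ[K] MvPolynomial (Fin 3) K,
      (∀ (t : ℕ) (F : MvPolynomial (Fin 3) K), F.IsHomogeneous t → (τ F).IsHomogeneous t) ∧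
      (∀ (m : ℕ) (F : MvPolynomial (Fin 3) K),
        (∀ σ : Fin 3 →₀ ℕ, σ 1 + σ 2 < m → coeff σ (τ F) = 0) →
        F ∈ (pointIdeal z) ^ m) := by
  classical
  obtain ⟨k0, hk0⟩ : ∃ k0, z k0 ≠ 0 := by
    by_contra h; push_neg at h; exact hz (funext h)
  set u : Equiv.Perm (Fin 3) := Equiv.swap 0 k0 with hu
  set ψv : Fin 3 → MvPolynomial (Fin 3) K := fun j =>
    if j = 0 then X k0 else X (u j) - C (z (u j) / z k0) * X k0 with hψv
  set τv : Fin 3 → MvPolynomial (Fin 3) K := fun j =>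
    if j = k0 then X 0 else X (u j) + C (z j / z k0) * X 0 with hτv
  have hψv0 : (aeval ψv) ((X 0 : MvPolynomial (Fin 3) K)) = X k0 := by
    rw [aeval_X]; simp [ψv]
  have hcomp : ∀ j, (aeval ψv) (τv j) = (X j : MvPolynomial (Fin 3) K) := by
    intro j
    by_cases hj : j = k0
    · subst hj
      simp only [τv, if_pos rfl]
      exact hψv0
    · have huj : u j ≠ 0 := by
        intro h0
        apply hj
        have h1 := congrArg u h0
        rwa [Equiv.swap_apply_self, Equiv.swap_apply_left] at h1
      have huu : u (u j) = j := Equiv.swap_apply_self _ _ _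
      simp only [τv, if_neg hj, map_add, map_mul, aeval_X, aeval_C]
      rw [hψv]
      simp only [if_neg huj, if_pos rfl, huu, algebraMap_eq, eq_self_iff_true, if_true]
      ring
  have hψτ : ∀ F, (aeval ψv) ((aeval τv) F) = F := by
    intro F
    have hid : (aeval ψv).comp (aeval τv) =
        AlgHom.id K (MvPolynomial (Fin 3) K) := by
      apply MvPolynomial.algHom_ext
      intro j
      simp only [AlgHom.comp_apply, AlgHom.id_apply, aeval_X]
      exact hcomp j
    have := AlgHom.congr_fun hid F
    simpa using this
  refine ⟨aeval τv, ?_, ?_⟩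
  · intro t F hF
    have hτv1 : ∀ j, (τv j).IsHomogeneous 1 := by
      intro j
      by_cases hj : j = k0
      · simp only [τv, if_pos hj]
        exact isHomogeneous_X _ _
      · simp only [τv, if_neg hj]
        exact (isHomogeneous_X _ _).add ((isHomogeneous_X _ _).C_mul _)
    simpa using hF.aeval τv hτv1
  · intro m F hcoeff
    have hG : (aeval τv) F ∈ (Ideal.span {X 1, X 2} : Ideal (MvPolynomial (Fin 3) K)) ^ m :=
      mem_span_X12_pow hcoeff
    have hmap : F ∈ Ideal.map ((aeval ψv : MvPolynomial (Fin 3) K →ₐ[K]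
        MvPolynomial (Fin 3) K) : MvPolynomial (Fin 3) K →+* MvPolynomial (Fin 3) K)
        ((Ideal.span {X 1, X 2} : Ideal (MvPolynomial (Fin 3) K)) ^ m) := by
      have hF : F = (aeval ψv) ((aeval τv) F) := (hψτ F).symm
      rw [hF]
      exact Ideal.mem_map_of_mem _ hG
    have hmem : ∀ j : Fin 3, j ≠ 0 → (aeval ψv) ((X j : MvPolynomial (Fin 3) K)) ∈ pointIdeal z := by
      intro j hj
      rw [aeval_X]
      simp only [ψv, if_neg hj]
      apply mem_pointIdeal_of_isHomogeneous
        ((isHomogeneous_X _ _).sub ((isHomogeneous_X _ _).C_mul _))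
      simp only [map_sub, map_mul, eval_X, eval_C]
      rw [div_mul_cancel₀ _ hk0, sub_self]
    have h2 : Ideal.map ((aeval ψv : MvPolynomial (Fin 3) K →ₐ[K]
        MvPolynomial (Fin 3) K) : MvPolynomial (Fin 3) K →+* MvPolynomial (Fin 3) K)
        ((Ideal.span {X 1, X 2} : Ideal (MvPolynomial (Fin 3) K)) ^ m) ≤ (pointIdeal z) ^ m := by
      rw [Ideal.map_pow]
      apply Ideal.pow_right_mono
      rw [Ideal.map_span]
      apply Ideal.span_le.mpr
      rintro y ⟨x, hx, rfl⟩
      rcases hx with rfl | rfl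
      · exact hmem 1 (by decide)
      · exact hmem 2 (by decide)
    exact h2 hmap

end AuxSubst


section AuxCount
open MvPolynomial

/-- Pairs of naturals with sum `< n`. -/
def triSet (n : ℕ) : Finset (ℕ × ℕ) := (Finset.range n).biUnion Finset.HasAntidiagonal.antidiagonal

lemma mem_triSet {n : ℕ} {p : ℕ × ℕ} : p ∈ triSet n ↔ p.1 + p.2 < n := by
  simp only [triSet, Finset.mem_biUnion, Finset.mem_range, Finset.HasAntidiagonal.mem_antidiagonal]
  constructor
  · rintro ⟨s, hs, rfl⟩; exact hs
  · intro h; exact ⟨p.1 + p.2, h, rfl⟩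

lemma triSet_card (n : ℕ) : 2 * (triSet n).card = n * (n + 1) := by
  classical
  rw [triSet, Finset.card_biUnion]
  · simp only [Finset.Nat.card_antidiagonal]
    induction n with
    | zero => simp
    | succ k ih =>
      rw [Finset.sum_range_succ, Nat.mul_add, ih]
      ring
  · intro a _ b _ hab
    simp only [Finset.disjoint_left, Finset.HasAntidiagonal.mem_antidiagonal]
    intro p hpa hpb
    exact hab (hpa.symm.trans hpb)

/-- The exponent of the generic monomial of degree `t` with given degrees in `X 1, X 2`. -/
noncomputable def triMono (t : ℕ) (p : ℕ × ℕ) : Fin 3 →₀ ℕ :=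
  Finsupp.single 0 (t - p.1 - p.2) + Finsupp.single 1 p.1 + Finsupp.single 2 p.2

lemma triMono_apply_0 (t : ℕ) (p : ℕ × ℕ) : triMono t p 0 = t - p.1 - p.2 := by
  simp [triMono, Finsupp.single_apply]

lemma triMono_apply_1 (t : ℕ) (p : ℕ × ℕ) : triMono t p 1 = p.1 := by
  simp [triMono, Finsupp.single_apply]

lemma triMono_apply_2 (t : ℕ) (p : ℕ × ℕ) : triMono t p 2 = p.2 := by
  simp [triMono, Finsupp.single_apply]

lemma degree_fin3 (σ : Fin 3 →₀ ℕ) : σ.degree = σ 0 + σ 1 + σ 2 := by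
  show ∑ i ∈ σ.support, σ i = _
  rw [Finset.sum_subset (Finset.subset_univ _)
    (fun i _ hi => Finsupp.notMem_support_iff.mp hi)]
  exact Fin.sum_univ_three σ

lemma triMono_degree {t : ℕ} {p : ℕ × ℕ} (h : p.1 + p.2 ≤ t) :
    (triMono t p).degree = t := by
  rw [degree_fin3, triMono_apply_0, triMono_apply_1, triMono_apply_2]
  omega

variable {K : Type*} [Field K]

lemma exists_vanishing_form {d : ℕ} (v : Fin d → Fin 3 → K) (hv : ∀ i, v i ≠ 0)
    (m t : ℕ) (hdim : d * (m * (m + 1)) < (t + 1) * (t + 2)) :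
    ∃ F : MvPolynomial (Fin 3) K, F ≠ 0 ∧ F.totalDegree ≤ t ∧
      ∀ i, F ∈ (pointIdeal (v i)) ^ m := by
  classical
  choose τ hτhom hτmem using fun i => exists_subst (v i) (hv i)
  set S : Finset (ℕ × ℕ) := triSet (t + 1) with hS
  set N : Finset (ℕ × ℕ) := triSet m with hN
  let Φ : (↥S → K) →ₗ[K] MvPolynomial (Fin 3) K :=
    Fintype.linearCombination K (fun p : ↥S => (monomial (triMono t ↑p) (1 : K)))
  let Θ : (↥S → K) →ₗ[K] ((Fin d × ↥N) → K) :=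
    LinearMap.pi (fun k => (lcoeff K (triMono t ↑k.2)) ∘ₗ (τ k.1).toLinearMap ∘ₗ Φ)
  have hcard : Fintype.card (Fin d × ↥N) < Fintype.card ↥S := by
    rw [Fintype.card_prod, Fintype.card_fin, Fintype.card_coe, Fintype.card_coe]
    have h1 : 2 * (d * N.card) < 2 * S.card := by
      rw [show 2 * (d * N.card) = d * (2 * N.card) by ring, hN, triSet_card m, hS,
        triSet_card (t + 1)]
      exact hdim
    omega
  have hninj : ¬ Function.Injective Θ := by
    intro hinj
    have hle := LinearMap.finrank_le_finrank_of_injective hinj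
    rw [Module.finrank_pi, Module.finrank_pi] at hle
    omega
  obtain ⟨c1, c2, heq, hne⟩ : ∃ c1 c2, Θ c1 = Θ c2 ∧ c1 ≠ c2 := by
    unfold Function.Injective at hninj
    push_neg at hninj
    obtain ⟨c1, c2, h1, h2⟩ := hninj
    exact ⟨c1, c2, h1, h2⟩
  set c : ↥S → K := c1 - c2 with hc
  have hc0 : c ≠ 0 := sub_ne_zero.mpr hne
  have hΘc : Θ c = 0 := by rw [hc, map_sub, heq, sub_self]
  set F : MvPolynomial (Fin 3) K := Φ c with hF
  have hΦ : F = ∑ p : ↥S, monomial (triMono t (↑p : ℕ × ℕ)) (c p) := by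
    rw [hF, Fintype.linearCombination_apply]
    apply Finset.sum_congr rfl
    intro p _
    rw [smul_monomial, smul_eq_mul, mul_one]
  have hFhom : F.IsHomogeneous t := by
    rw [hΦ]
    apply IsHomogeneous.sum
    intro p _
    exact isHomogeneous_monomial _ (triMono_degree (by
      have := mem_triSet.mp p.2
      omega))
  have hcoeffF : ∀ p : ↥S, coeff (triMono t (↑p : ℕ × ℕ)) F = c p := by
    intro p
    rw [hΦ, coeff_sum]
    rw [Finset.sum_eq_single p]
    · rw [coeff_monomial, if_pos rfl]
    · intro q _ hqp
      rw [coeff_monomial, if_neg]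
      intro hq
      apply hqp
      have h1 := congrArg (fun σ => (σ 1, σ 2)) hq
      simp only [triMono_apply_1, triMono_apply_2] at h1
      have h2 := Prod.ext_iff.mp h1
      exact Subtype.ext (Prod.ext h2.1 h2.2)
    · intro hp
      exact absurd (Finset.mem_univ p) hp
  have hF0 : F ≠ 0 := by
    intro h0
    apply hc0
    funext p
    have := hcoeffF p
    rw [h0, coeff_zero] at this
    exact this.symm
  refine ⟨F, hF0, hFhom.totalDegree_le, ?_⟩
  intro i
  apply hτmem i m F
  intro σ hσ
  by_cases hdeg : σ.degree = t
  · have hle : σ 1 + σ 2 ≤ t := by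
      rw [degree_fin3] at hdeg
      omega
    have hσeq : σ = triMono t (σ 1, σ 2) := by
      have h0 : σ 0 = t - σ 1 - σ 2 := by
        rw [degree_fin3] at hdeg
        omega
      ext j
      match j with
      | 0 => rw [triMono_apply_0, h0]
      | 1 => rw [triMono_apply_1]
      | 2 => rw [triMono_apply_2]
    have hmemN : (σ 1, σ 2) ∈ N := mem_triSet.mpr hσ
    have hcomp := congrFun hΘc (i, ⟨(σ 1, σ 2), hmemN⟩)
    simp only [Θ, LinearMap.pi_apply, LinearMap.comp_apply, AlgHom.toLinearMap_apply,
      lcoeff_apply, Pi.zero_apply] at hcomp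
    rw [hσeq]
    exact hcomp
  · exact (hτhom i t F hFhom).coeff_eq_zero hdeg

end AuxCount

/-- for `d ≥ 10`, the Waldschmidt constant of the ideal of a quasi star
configuration `Z_d` satisfies `α̂(I) ≤ (d + √d)/2`. -/
theorem waldschmidt_quasi_star_le {K : Type*} [Field K] [IsAlgClosed K]
    {d : ℕ} (hd : 10 ≤ d) (Z : QuasiStarConfig K d)
    (I : Ideal (MvPolynomial (Fin 3) K)) (hI : I = Z.ideal) :
    waldschmidt I ≤ ((d : ℝ) + Real.sqrt d) / 2 := by
  have hd0 : 0 < d := by omega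
  set s : ℝ := Real.sqrt d with hs
  have hs0 : 0 ≤ s := Real.sqrt_nonneg _
  have hss : s * s = (d : ℝ) := Real.mul_self_sqrt (by positivity)
  have key : ∀ m : ℕ, 0 < m → waldschmidt I ≤ ((d : ℝ) + s) / 2 + (s + 1) / (2 * m) := by
    intro m hm
    set t : ℕ := ⌈((m : ℝ) + 1) * s⌉₊ with ht
    have htle : ((m : ℝ) + 1) * s ≤ (t : ℝ) := Nat.le_ceil _
    have hdim : d * (m * (m + 1)) < (t + 1) * (t + 2) := by
      have hR : (d : ℝ) * (m * (m + 1)) < ((t : ℝ) + 1) * ((t : ℝ) + 2) := by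
        have hA : (((m : ℝ) + 1) * s) * (((m : ℝ) + 1) * s) ≤ (t : ℝ) * (t : ℝ) :=
          mul_self_le_mul_self (by positivity) htle
        have hB : (d : ℝ) * ((m : ℝ) * ((m : ℝ) + 1)) ≤
            (d : ℝ) * (((m : ℝ) + 1) * ((m : ℝ) + 1)) := by
          apply mul_le_mul_of_nonneg_left _ (by positivity)
          nlinarith [Nat.cast_nonneg (α := ℝ) m]
        have hC : (((m : ℝ) + 1) * s) * (((m : ℝ) + 1) * s) =
            (((m : ℝ) + 1) * ((m : ℝ) + 1)) * (d : ℝ) := by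
          rw [← hss]; ring
        nlinarith [hA, hB, hC, Nat.cast_nonneg (α := ℝ) t]
      exact_mod_cast hR
    obtain ⟨F, hF0, hFdeg, hFmem⟩ := exists_vanishing_form Z.q Z.q_ne m t hdim
    set L : MvPolynomial (Fin 3) K := ∏ k, Z.L k with hL
    have hg : F * L ^ m ∈ symbolicPower I (2 * m) := by
      rw [hI]
      exact Z.mul_pow_mem_symbolicPower hd0 m F hFmem
    have hgne : F * L ^ m ≠ 0 := by
      apply mul_ne_zero hF0
      apply pow_ne_zero
      rw [hL]
      exact Finset.prod_ne_zero_iff.mpr fun k _ => Z.L_ne k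
    have hLdeg : L.totalDegree ≤ d := by
      calc L.totalDegree ≤ ∑ k, (Z.L k).totalDegree := totalDegree_finset_prod _ _
        _ ≤ ∑ _k : Fin d, 1 := Finset.sum_le_sum fun k _ => (Z.L_hom k).totalDegree_le
        _ = d := by simp
    have hgdeg : (F * L ^ m).totalDegree ≤ t + m * d := by
      calc (F * L ^ m).totalDegree ≤ F.totalDegree + (L ^ m).totalDegree :=
            totalDegree_mul _ _
        _ ≤ t + m * L.totalDegree := add_le_add hFdeg (totalDegree_pow _ _)
        _ ≤ t + m * d := by
            have := Nat.mul_le_mul_left m hLdeg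
            omega
    have hinit : initDeg (symbolicPower I (2 * m)) ≤ t + m * d := by
      have hmem : (F * L ^ m).totalDegree ∈
          {k | ∃ f ∈ symbolicPower I (2 * m), f ≠ 0 ∧ MvPolynomial.totalDegree f = k} :=
        ⟨F * L ^ m, hg, hgne, rfl⟩
      exact le_trans (Nat.sInf_le hmem) hgdeg
    have hbdd : BddBelow (Set.range fun k : ℕ+ =>
        (initDeg (symbolicPower I k) : ℝ) / (k : ℝ)) := by
      refine ⟨0, ?_⟩
      rintro x ⟨k, rfl⟩
      positivity
    have hw : waldschmidt I ≤
        (initDeg (symbolicPower I (2 * m)) : ℝ) / ((2 * m : ℕ) : ℝ) := by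
      have h := ciInf_le hbdd (⟨2 * m, by omega⟩ : ℕ+)
      exact h
    have h2m : (0 : ℝ) < ((2 * m : ℕ) : ℝ) := by
      have : 0 < 2 * m := by omega
      exact_mod_cast this
    have h1 : (initDeg (symbolicPower I (2 * m)) : ℝ) ≤ (t : ℝ) + (m : ℝ) * d := by
      have h1' : ((t + m * d : ℕ) : ℝ) = (t : ℝ) + (m : ℝ) * d := by push_cast; ring
      rw [← h1']
      exact_mod_cast hinit
    have h2 : (t : ℝ) ≤ ((m : ℝ) + 1) * s + 1 :=
      le_of_lt (Nat.ceil_lt_add_one (by positivity))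
    have hstep : (initDeg (symbolicPower I (2 * m)) : ℝ) / ((2 * m : ℕ) : ℝ) ≤
        (((m : ℝ) + 1) * s + 1 + (m : ℝ) * d) / ((2 * m : ℕ) : ℝ) :=
      (div_le_div_iff_of_pos_right h2m).mpr (by linarith)
    have hfinal : (((m : ℝ) + 1) * s + 1 + (m : ℝ) * d) / ((2 * m : ℕ) : ℝ) =
        ((d : ℝ) + s) / 2 + (s + 1) / (2 * m) := by
      have hm' : (0 : ℝ) < (m : ℝ) := by exact_mod_cast hm
      push_cast
      field_simp
      ring
    calc waldschmidt I ≤ _ := hw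
      _ ≤ _ := hstep
      _ = _ := hfinal
  by_contra hcon
  push_neg at hcon
  set δ : ℝ := waldschmidt I - ((d : ℝ) + s) / 2 with hδ
  have hδ0 : 0 < δ := by
    simp only [hδ]
    linarith
  set m : ℕ := ⌈(s + 1) / δ⌉₊ + 1 with hm
  have hm0 : 0 < m := by omega
  have h1 := key m hm0
  have h4 : (s + 1) / δ < (m : ℝ) := by
    have h3 : (s + 1) / δ ≤ (⌈(s + 1) / δ⌉₊ : ℝ) := Nat.le_ceil _
    rw [hm]
    push_cast
    linarith
  have h5 : s + 1 < δ * m := by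
    rw [div_lt_iff₀ hδ0] at h4
    linarith
  have h2 : (s + 1) / (2 * m) < δ := by
    rw [div_lt_iff₀ (by positivity)]
    have hm' : (0 : ℝ) ≤ (m : ℝ) := Nat.cast_nonneg _
    nlinarith
  have : waldschmidt I < waldschmidt I := by
    calc waldschmidt I ≤ ((d : ℝ) + s) / 2 + (s + 1) / (2 * m) := h1
      _ < ((d : ℝ) + s) / 2 + δ := by linarith
      _ = waldschmidt I := by rw [hδ]; ring
  exact lt_irrefl _ this
end

section
/- There is no real number c < 2 such that for every radical ideal I of points in K[P^2] and all positive integers m, r with m/r ≥ c, the containment I^(m) ⊆ I^r holds. -/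
open MvPolynomial

section Poly
variable {K : Type*} [Field K] {n : ℕ}

attribute [local instance] MvPolynomial.gradedAlgebra

end Poly

namespace NoC

variable {K : Type*} [Field K]

/-- substitution along a parametrized affine line `s ↦ A + s • B`. -/
noncomputable def chart (A B : Fin 3 → K) : MvPolynomial (Fin 3) K →+* Polynomial K :=
  eval₂Hom Polynomial.C fun v => Polynomial.C (A v) + Polynomial.C (B v) * Polynomial.X

lemma chart_eval (A B : Fin 3 → K) (s : K) (f : MvPolynomial (Fin 3) K) :
    Polynomial.eval s (chart A B f) = eval (fun v => A v + s * B v) f := by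
  have h : (Polynomial.evalRingHom s).comp (chart A B) =
      (eval (fun v => A v + s * B v) : MvPolynomial (Fin 3) K →+* K) := by
    apply MvPolynomial.ringHom_ext
    · intro r
      simp only [RingHom.coe_comp, Function.comp_apply, chart, eval₂Hom_C,
        Polynomial.coe_evalRingHom, Polynomial.eval_C, eval_C]
    · intro i
      simp only [RingHom.coe_comp, Function.comp_apply, chart, eval₂Hom_X',
        Polynomial.coe_evalRingHom, Polynomial.eval_add, Polynomial.eval_C,
        Polynomial.eval_mul, Polynomial.eval_X, eval_X]
      ring
  exact RingHom.congr_fun h f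

lemma chart_natDegree_le (A B : Fin 3 → K) (f : MvPolynomial (Fin 3) K) :
    (chart A B f).natDegree ≤ f.totalDegree := by
  rw [chart, coe_eval₂Hom, MvPolynomial.eval₂_eq]
  apply Polynomial.natDegree_sum_le_of_forall_le
  intro dm hdm
  refine le_trans Polynomial.natDegree_mul_le ?_
  rw [Polynomial.natDegree_C, zero_add]
  refine le_trans (Polynomial.natDegree_prod_le _ _) ?_
  refine le_trans (Finset.sum_le_sum (g := fun i => dm i) fun i _ => ?_) ?_
  · refine le_trans Polynomial.natDegree_pow_le ?_
    have h1 : (Polynomial.C (A i) + Polynomial.C (B i) * Polynomial.X).natDegree ≤ 1 := by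
      refine le_trans (Polynomial.natDegree_add_le _ _) ?_
      simp only [Polynomial.natDegree_C]
      refine max_le (by omega) (le_trans Polynomial.natDegree_mul_le ?_)
      simp
    calc dm i * (Polynomial.C (A i) + Polynomial.C (B i) * Polynomial.X).natDegree
        ≤ dm i * 1 := Nat.mul_le_mul_left _ h1
      _ = dm i := Nat.mul_one _
  · exact MvPolynomial.le_totalDegree hdm

end NoC
namespace NoC

variable {K : Type*} [Field K]

lemma mem_pointIdeal_iff' (p : Fin 3 → K) (f : MvPolynomial (Fin 3) K) :
    f ∈ pointIdeal p ↔ ∀ c : K, eval (c • p) f = 0 := by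
  simp [pointIdeal, Ideal.mem_iInf, RingHom.mem_ker]

lemma pointIdeal_eq_ker [Infinite K] (p : Fin 3 → K) :
    pointIdeal p = RingHom.ker (chart 0 p) := by
  ext f
  rw [mem_pointIdeal_iff', RingHom.mem_ker]
  constructor
  · intro h
    apply Polynomial.zero_of_eval_zero
    intro c
    rw [chart_eval]
    have := h c
    simpa [smul_eq_mul] using (show eval (fun v => c * p v) f = 0 from this)
  · intro h c
    have := congrArg (Polynomial.eval c) h
    rw [chart_eval] at this
    show eval (fun v => c * p v) f = 0
    simpa [smul_eq_mul] using this

lemma pointIdeal_isPrime [Infinite K] (p : Fin 3 → K) : (pointIdeal p).IsPrime := by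
  rw [pointIdeal_eq_ker]
  exact RingHom.ker_isPrime _

lemma eval_smul_homog {σ : Type*} [Fintype σ] {f : MvPolynomial σ K} {n : ℕ}
    (hf : f.IsHomogeneous n) (c : K) (x : σ → K) :
    eval (c • x) f = c ^ n * eval x f := by
  rw [eval_eq', eval_eq', Finset.mul_sum]
  apply Finset.sum_congr rfl
  intro d hd
  have h1 : ∑ i ∈ d.support, d i = n := by
    have := hf (MvPolynomial.mem_support_iff.mp hd)
    simpa [Finsupp.weight_apply, Finsupp.sum] using this
  have hdeg : ∑ i, d i = n := by
    rw [← h1]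
    exact (Finset.sum_subset (Finset.subset_univ _)
      (fun i _ hi => Finsupp.notMem_support_iff.mp hi)).symm
  calc coeff d f * ∏ i, (c • x) i ^ d i
      = coeff d f * ∏ i, (c ^ d i * x i ^ d i) := by
        congr 1; apply Finset.prod_congr rfl; intro i _
        simp [mul_pow, smul_eq_mul]
    _ = coeff d f * (c ^ (∑ i, d i) * ∏ i, x i ^ d i) := by
        rw [Finset.prod_mul_distrib, Finset.prod_pow_eq_pow_sum]
    _ = c ^ n * (coeff d f * ∏ i, x i ^ d i) := by rw [hdeg]; ring

lemma eval_homogeneousComponent_zero [Infinite K] {p : Fin 3 → K}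
    {f : MvPolynomial (Fin 3) K} (hf : f ∈ pointIdeal p) (a : ℕ) :
    eval p (homogeneousComponent a f) = 0 := by
  by_cases ha : a ≤ f.totalDegree
  swap
  · rw [homogeneousComponent_eq_zero _ f (lt_of_not_ge ha), map_zero]
  set q : Polynomial K := ∑ j ∈ Finset.range (f.totalDegree + 1),
    Polynomial.C (eval p (homogeneousComponent j f)) * Polynomial.X ^ j with hq
  have hqe : ∀ c : K, Polynomial.eval c q = 0 := by
    intro c
    have hmem := (mem_pointIdeal_iff' p f).mp hf c
    calc Polynomial.eval c q
        = ∑ j ∈ Finset.range (f.totalDegree + 1),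
            eval p (homogeneousComponent j f) * c ^ j := by
          simp [hq, Polynomial.eval_finset_sum]
      _ = ∑ j ∈ Finset.range (f.totalDegree + 1),
            eval (c • p) (homogeneousComponent j f) := by
          apply Finset.sum_congr rfl
          intro j _
          rw [eval_smul_homog (homogeneousComponent_isHomogeneous j f), mul_comm]
      _ = eval (c • p) f := by
          rw [← map_sum, MvPolynomial.sum_homogeneousComponent]
      _ = 0 := hmem
  have hq0 : q = 0 := Polynomial.zero_of_eval_zero q hqe
  have hco := congrArg (fun r => Polynomial.coeff r a) hq0
  simp only [hq, Polynomial.finset_sum_coeff, Polynomial.coeff_C_mul,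
    Polynomial.coeff_X_pow, Polynomial.coeff_zero, mul_ite, mul_one, mul_zero] at hco
  rwa [Finset.sum_ite_eq (Finset.range (f.totalDegree + 1)) a
    (fun j => eval p (homogeneousComponent j f)),
    if_pos (Finset.mem_range.mpr (by omega))] at hco

lemma eq_C_of_isHomogeneous_zero {f : MvPolynomial (Fin 3) K}
    (hf : f.IsHomogeneous 0) : f = C (coeff 0 f) := by
  ext d
  rw [coeff_C]
  split_ifs with hd
  · rw [← hd]
  · by_contra h0
    have := hf h0
    have hdeg : Finsupp.degree d = 0 := by
      rwa [Finsupp.degree_eq_weight_one]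
    exact hd ((Finsupp.degree_eq_zero_iff d).mp hdeg).symm

end NoC
namespace NoC

variable {K : Type*} [Field K]

noncomputable def Lf (a : K) : MvPolynomial (Fin 3) K :=
  X 0 + C a * X 1 + C (a ^ 2) * X 2

def Pt (a b : K) : Fin 3 → K := ![a * b, -(a + b), 1]

lemma Pt_comm (a b : K) : Pt a b = Pt b a := by
  funext v
  fin_cases v <;> simp [Pt] <;> ring

lemma eval_Lf (x : Fin 3 → K) (a : K) :
    eval x (Lf a) = x 0 + a * x 1 + a ^ 2 * x 2 := by
  simp [Lf]

lemma eval_Pt_Lf (a b e : K) : eval (Pt a b) (Lf e) = (e - a) * (e - b) := by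
  simp [eval_Lf, Pt]
  ring

lemma Lf_mem (a b : K) : Lf a ∈ pointIdeal (Pt a b) := by
  rw [mem_pointIdeal_iff']
  intro c
  simp [eval_Lf, Pt, smul_eq_mul]
  ring

lemma Lf_mem' (a b : K) : Lf b ∈ pointIdeal (Pt a b) := by
  rw [Pt_comm]; exact Lf_mem b a

lemma X2_not_mem {p : Fin 3 → K} (hp : p 2 ≠ 0) :
    (X 2 : MvPolynomial (Fin 3) K) ∉ pointIdeal p := by
  rw [mem_pointIdeal_iff']
  push_neg
  exact ⟨1, by simpa using hp⟩

lemma Lf_isHomogeneous (a : K) : (Lf a).IsHomogeneous 1 :=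
  ((isHomogeneous_X K 0).add ((isHomogeneous_X K 1).C_mul a)).add
    ((isHomogeneous_X K 2).C_mul (a ^ 2))

lemma X2_eq_comb {a b c : K} (hab : a ≠ b) (hac : a ≠ c) (hbc : b ≠ c) :
    (X 2 : MvPolynomial (Fin 3) K) =
      C (((a - b) * (a - c))⁻¹) * Lf a + C (((b - a) * (b - c))⁻¹) * Lf b +
        C (((c - a) * (c - b))⁻¹) * Lf c := by
  have hab' : a - b ≠ 0 := sub_ne_zero.mpr hab
  have hac' : a - c ≠ 0 := sub_ne_zero.mpr hac
  have hbc' : b - c ≠ 0 := sub_ne_zero.mpr hbc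
  have hba' : b - a ≠ 0 := sub_ne_zero.mpr (Ne.symm hab)
  have hca' : c - a ≠ 0 := sub_ne_zero.mpr (Ne.symm hac)
  have hcb' : c - b ≠ 0 := sub_ne_zero.mpr (Ne.symm hbc)
  set α := ((a - b) * (a - c))⁻¹ with hα
  set β := ((b - a) * (b - c))⁻¹ with hβ
  set γ := ((c - a) * (c - b))⁻¹ with hγ
  have e0 : α + β + γ = 0 := by
    rw [hα, hβ, hγ]; field_simp; ring
  have e1 : α * a + β * b + γ * c = 0 := by
    rw [hα, hβ, hγ]; field_simp; ring
  have e2 : α * a ^ 2 + β * b ^ 2 + γ * c ^ 2 = 1 := by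
    rw [hα, hβ, hγ]; field_simp; ring
  have hexp : C (α + β + γ) * X 0 + C (α * a + β * b + γ * c) * X 1 +
      C (α * a ^ 2 + β * b ^ 2 + γ * c ^ 2) * (X 2 : MvPolynomial (Fin 3) K) =
      C α * Lf a + C β * Lf b + C γ * Lf c := by
    simp only [Lf, map_add, map_mul, map_pow]
    ring
  rw [← hexp, e0, e1, e2]
  simp

lemma crt_pow {R' : Type*} [CommRing R'] {A B : Ideal R'} {u : R'}
    (h : u ∈ A ⊔ B) (m : ℕ) : u ^ (m + m) ∈ A ^ m ⊔ B ^ m :=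
  Ideal.sup_pow_add_le_pow_sup_pow (Ideal.pow_mem_pow h (m + m))

lemma crt_aux {R' : Type*} [CommRing R'] {ι : Type*} [DecidableEq ι]
    (Q : ι → Ideal R') (u : R') (s0 : ι) (S : Finset ι)
    (h : ∀ t ∈ S, u ∈ Q s0 ⊔ Q t) :
    u ^ S.card ∈ Q s0 ⊔ ∏ t ∈ S, Q t := by
  induction S using Finset.induction with
  | empty => simp [Ideal.one_eq_top]
  | @insert a S ha ih =>
    rw [Finset.card_insert_of_notMem ha, Finset.prod_insert ha, pow_succ]
    have h1 := ih fun t ht => h t (Finset.mem_insert_of_mem ht)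
    have h2 := h a (Finset.mem_insert_self a S)
    obtain ⟨x, hx, y, hy, hxy⟩ := Submodule.mem_sup.mp h1
    obtain ⟨z, hz, w, hw, hzw⟩ := Submodule.mem_sup.mp h2
    rw [← hxy, ← hzw]
    have hre : (x + y) * (z + w) = (x * z + x * w + y * z) + w * y := by ring
    rw [hre]
    exact Submodule.add_mem _
      (Submodule.mem_sup_left
        (Ideal.add_mem _ (Ideal.add_mem _ (Ideal.mul_mem_right z _ hx)
          (Ideal.mul_mem_right w _ hx)) (Ideal.mul_mem_left _ y hz)))
      (Submodule.mem_sup_right (Ideal.mul_mem_mul hw hy))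

lemma crt_exists {R' : Type*} [CommRing R'] {ι : Type*} [DecidableEq ι]
    (Q : ι → Ideal R') (u x : R') (S : Finset ι)
    (hco : ∀ s ∈ S, ∀ t ∈ S, s ≠ t → u ∈ Q s ⊔ Q t)
    (hx : ∀ s ∈ S, x ∈ Q s) :
    ∃ M : ℕ, u ^ M * x ∈ ∏ s ∈ S, Q s := by
  induction S using Finset.induction with
  | empty => exact ⟨0, by simp [Ideal.one_eq_top]⟩
  | @insert a S ha ih =>
    obtain ⟨M, hM⟩ := ih
      (fun s hs t ht hst =>
        hco s (Finset.mem_insert_of_mem hs) t (Finset.mem_insert_of_mem ht) hst)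
      (fun s hs => hx s (Finset.mem_insert_of_mem hs))
    have h1 : u ^ S.card ∈ Q a ⊔ ∏ t ∈ S, Q t :=
      crt_aux Q u a S fun t ht =>
        hco a (Finset.mem_insert_self a S) t (Finset.mem_insert_of_mem ht)
          (fun hat => ha (hat ▸ ht))
    obtain ⟨z, hz, w, hw, hzw⟩ := Submodule.mem_sup.mp h1
    refine ⟨S.card + M, ?_⟩
    rw [Finset.prod_insert ha]
    have hre : u ^ (S.card + M) * x = z * (u ^ M * x) + (x * w) * u ^ M := by
      rw [pow_add, ← hzw]; ring
    rw [hre]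
    exact Ideal.add_mem _ (Ideal.mul_mem_mul hz hM)
      (Ideal.mul_mem_right _ _
        (Ideal.mul_mem_mul (hx a (Finset.mem_insert_self a S)) hw))

lemma degree_add' (y z : Fin 3 →₀ ℕ) :
    Finsupp.degree (y + z) = Finsupp.degree y + Finsupp.degree z := by
  simp [Finsupp.degree_eq_weight_one, map_add]

def lowDeg (N : ℕ) : Ideal (MvPolynomial (Fin 3) K) where
  carrier := {f | ∀ m ∈ f.support, N ≤ Finsupp.degree m}
  zero_mem' := by simp
  add_mem' := by
    intro f g hf hg m hm
    rcases Finset.mem_union.mp (MvPolynomial.support_add hm) with h | h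
    · exact hf m h
    · exact hg m h
  smul_mem' := by
    intro cp f hf m hm
    rw [smul_eq_mul] at hm
    obtain ⟨y, hy, z, hz, rfl⟩ := Finset.mem_add.mp (MvPolynomial.support_mul _ _ hm)
    rw [degree_add']
    exact le_add_of_le_right (hf z hz)

lemma mem_lowDeg {N : ℕ} {f : MvPolynomial (Fin 3) K} :
    f ∈ lowDeg N ↔ ∀ m ∈ f.support, N ≤ Finsupp.degree m := Iff.rfl

lemma lowDeg_mul_le (N M : ℕ) :
    lowDeg (K := K) N * lowDeg M ≤ lowDeg (N + M) := by
  rw [Ideal.mul_le]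
  intro f hf g hg m hm
  obtain ⟨y, hy, z, hz, rfl⟩ := Finset.mem_add.mp (MvPolynomial.support_mul _ _ hm)
  rw [degree_add']
  exact add_le_add (hf y hy) (hg z hz)

lemma lowDeg_pow (N r : ℕ) : (lowDeg (K := K) N) ^ r ≤ lowDeg (N * r) := by
  induction r with
  | zero =>
    rw [pow_zero, Nat.mul_zero]
    intro f _ m _
    exact Nat.zero_le _
  | succ r ih =>
    rw [pow_succ, Nat.mul_succ]
    exact le_trans (Ideal.mul_mono_left ih) (lowDeg_mul_le _ _)

noncomputable def chi : MvPolynomial (Fin 3) K →+* Polynomial K :=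
  eval₂Hom Polynomial.C ![Polynomial.X, 0, 0]

lemma chi_Lf (a : K) : chi (Lf a) = Polynomial.X := by
  simp [chi, Lf]

lemma degree_fin3 (m : Fin 3 →₀ ℕ) : Finsupp.degree m = m 0 + m 1 + m 2 := by
  rw [show Finsupp.degree m = ∑ i ∈ m.support, m i from rfl]
  rw [Finset.sum_subset (Finset.subset_univ _)
    (fun i _ hi => Finsupp.notMem_support_iff.mp hi)]
  exact Fin.sum_univ_three _

lemma chi_coeff_eq_zero {N : ℕ} {f : MvPolynomial (Fin 3) K}
    (hf : f ∈ lowDeg N) {j : ℕ} (hj : j < N) : (chi f).coeff j = 0 := by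
  conv_lhs => rw [f.as_sum]
  rw [map_sum, Polynomial.finset_sum_coeff]
  apply Finset.sum_eq_zero
  intro m hm
  rw [chi, coe_eval₂Hom, eval₂_monomial,
    Finsupp.prod_fintype _ _ (fun i => pow_zero _), Fin.prod_univ_three]
  simp only [Matrix.cons_val_zero, Matrix.cons_val_one, Matrix.head_cons]
  by_cases h1 : m 1 = 0 ∧ m 2 = 0
  · rw [h1.1, h1.2]
    simp only [pow_zero, mul_one, Polynomial.coeff_C_mul, Polynomial.coeff_X_pow]
    have hdeg : N ≤ m 0 := by
      have := hf m hm
      rw [degree_fin3, h1.1, h1.2] at this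
      omega
    rw [if_neg (by omega), mul_zero]
  · rcases not_and_or.mp h1 with h | h
    · rw [zero_pow h]
      simp
    · rw [show (![Polynomial.X, 0, 0] : Fin 3 → Polynomial K) 2 = 0 by rfl, zero_pow h]
      simp

lemma chi_F_pow {d : ℕ} (t : Fin d → K) (k : ℕ) :
    chi ((∏ i, Lf (t i)) ^ k) = Polynomial.X ^ (d * k) := by
  rw [map_pow, map_prod]
  simp only [chi_Lf]
  rw [Finset.prod_const, Finset.card_univ, Fintype.card_fin, ← pow_mul]

end NoC
namespace NoC

variable {K : Type*} [Field K]

lemma eval_aeval' {k : ℕ} (x : Fin k → K) (g : Fin 3 → MvPolynomial (Fin k) K)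
    (f : MvPolynomial (Fin 3) K) :
    eval x (aeval g f) = eval (fun i => eval x (g i)) f := by
  have h : (eval x).comp ((aeval g : MvPolynomial (Fin 3) K →ₐ[K] MvPolynomial (Fin k) K) :
      MvPolynomial (Fin 3) K →+* MvPolynomial (Fin k) K) =
      (eval (fun i => eval x (g i)) : MvPolynomial (Fin 3) K →+* K) := by
    apply MvPolynomial.ringHom_ext
    · intro r
      simp
    · intro i
      simp
  exact RingHom.congr_fun h f

lemma vanish [Infinite K] {d : ℕ} {t : Fin d → K} (ht : Function.Injective t) :
    ∀ (e : ℕ) (S : Finset (Fin d)) (f : MvPolynomial (Fin 3) K),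
      S.card = e + 2 → f.IsHomogeneous e →
      (∀ i ∈ S, ∀ j ∈ S, i ≠ j → eval (Pt (t i) (t j)) f = 0) → f = 0 := by
  classical
  intro e
  induction e with
  | zero =>
    intro S f hcard hhom hv
    obtain ⟨i, j, hij, rfl⟩ := Finset.card_eq_two.mp hcard
    have h0 := hv i (Finset.mem_insert_self i {j}) j
      (Finset.mem_insert_of_mem (Finset.mem_singleton_self j)) hij
    rw [eq_C_of_isHomogeneous_zero hhom, eval_C] at h0
    rw [eq_C_of_isHomogeneous_zero hhom, h0, map_zero]
  | succ e IH =>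
    intro S f hcard hhom hv
    obtain ⟨i, hiS⟩ : S.Nonempty := Finset.card_pos.mp (by omega)
    set a := t i with ha
    set A : Fin 3 → K := ![a ^ 2, 0, -1] with hA
    set B : Fin 3 → K := ![-a, 1, 0] with hB
    -- Step 1 : the affine restriction to the chart `A + s B` of the line vanishes
    have hchart : chart A B f = 0 := by
      apply Polynomial.eq_zero_of_natDegree_lt_card_of_eval_eq_zero' _
        ((S.erase i).image fun j => a + t j)
      · intro y hy
        obtain ⟨j, hjm, rfl⟩ := Finset.mem_image.mp hy
        have hji : j ≠ i := Finset.ne_of_mem_erase hjm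
        have hjS : j ∈ S := Finset.mem_of_mem_erase hjm
        rw [chart_eval]
        have hfun : (fun v => A v + (a + t j) * B v) = (-1 : K) • Pt a (t j) := by
          funext v
          fin_cases v <;> simp [hA, hB, Pt] <;> ring
        rw [hfun, eval_smul_homog hhom, hv i hiS j hjS (Ne.symm hji), mul_zero]
      · have hinj : Set.InjOn (fun j => a + t j) (S.erase i) := by
          intro x _ y _ hxy
          exact ht (by simpa using hxy)
        rw [Finset.card_image_of_injOn hinj, Finset.card_erase_of_mem hiS, hcard]
        have h1 : (chart A B f).natDegree ≤ e + 1 :=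
          (chart_natDegree_le A B f).trans hhom.totalDegree_le
        omega
    have hAB : ∀ s : K, eval (fun v => A v + s * B v) f = 0 := by
      intro s
      rw [← chart_eval, hchart, Polynomial.eval_zero]
    -- Step 2 : the other chart vanishes as well
    have hBA : chart B A f = 0 := by
      apply Polynomial.eq_zero_of_infinite_isRoot
      refine Set.Infinite.mono ?_ ((Set.finite_singleton (0 : K)).infinite_compl)
      intro s hs
      have hs0 : s ≠ 0 := hs
      show Polynomial.IsRoot _ s
      rw [Polynomial.IsRoot, chart_eval]
      have hfun : (fun v => B v + s * A v) = s • fun v => A v + s⁻¹ * B v := by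
        funext v
        simp only [Pi.smul_apply, smul_eq_mul]
        field_simp
        ring
      rw [hfun, eval_smul_homog hhom, hAB, mul_zero]
    have key : ∀ x0 x1 : K, eval (fun v => x0 * A v + x1 * B v) f = 0 := by
      intro x0 x1
      by_cases hx0 : x0 = 0
      · subst hx0
        have hfun : (fun v => 0 * A v + x1 * B v) = x1 • fun v => B v + 0 * A v := by
          funext v
          simp only [Pi.smul_apply, smul_eq_mul]
          ring
        rw [hfun, eval_smul_homog hhom, ← chart_eval, hBA, Polynomial.eval_zero, mul_zero]
      · have hfun : (fun v => x0 * A v + x1 * B v) = x0 • fun v => A v + (x1 / x0) * B v := by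
          funext v
          simp only [Pi.smul_apply, smul_eq_mul]
          field_simp
        rw [hfun, eval_smul_homog hhom, hAB, mul_zero]
    -- Step 3 : divisibility by the line
    set sg : Fin 3 → MvPolynomial (Fin 3) K :=
      ![C (a ^ 2) * X 1 - C a * X 2 + X 0, X 2, - X 1] with hsg
    set h := aeval sg f with hh
    have hcoeff0 : (finSuccEquiv K 2 h).coeff 0 = 0 := by
      apply MvPolynomial.funext (q := 0)
      intro x
      rw [map_zero]
      calc eval x ((finSuccEquiv K 2 h).coeff 0)
          = Polynomial.coeff (Polynomial.map (eval x) (finSuccEquiv K 2 h)) 0 :=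
            (coeff_eval_eq_eval_coeff (s' := x) (f := _) (i := 0)).symm
        _ = Polynomial.eval 0 (Polynomial.map (eval x) (finSuccEquiv K 2 h)) :=
            Polynomial.coeff_zero_eq_eval_zero _
        _ = eval (Fin.cons 0 x) h := (eval_eq_eval_mv_eval' x 0 h).symm
        _ = eval (fun v => x 0 * A v + x 1 * B v) f := by
            rw [hh, eval_aeval']
            have harg : (fun i => eval (Fin.cons 0 x) (sg i)) =
                fun v => x 0 * A v + x 1 * B v := by
              have hc0 : (Fin.cons 0 x : Fin 3 → K) 0 = 0 := Fin.cons_zero _ _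
              have hc1 : (Fin.cons 0 x : Fin 3 → K) 1 = x 0 := by
                rw [show (1 : Fin 3) = Fin.succ 0 from rfl, Fin.cons_succ]
              have hc2 : (Fin.cons 0 x : Fin 3 → K) 2 = x 1 := by
                rw [show (2 : Fin 3) = Fin.succ 1 from rfl, Fin.cons_succ]
              funext v
              fin_cases v <;>
                simp [hsg, hA, hB, hc0, hc1, hc2] <;> ring
            rw [harg]
        _ = 0 := key _ _
    obtain ⟨H1, hH1⟩ := Polynomial.X_dvd_iff.mpr hcoeff0
    have hXdvd : h = X 0 * ((finSuccEquiv K 2).symm H1) := by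
      apply (finSuccEquiv K 2).injective
      rw [map_mul, MvPolynomial.finSuccEquiv_X_zero, AlgEquiv.apply_symm_apply, hH1]
    set st : Fin 3 → MvPolynomial (Fin 3) K := ![Lf a, - X 2, X 1] with hst
    have hfh : aeval st h = f := by
      rw [hh]
      have hcomp : aeval st (aeval sg f) =
          aeval (fun i => aeval st (sg i)) f :=
        AlgHom.congr_fun (comp_aeval sg (aeval st)) f
      rw [hcomp]
      have hXs : (fun i => aeval st (sg i)) = (X : Fin 3 → MvPolynomial (Fin 3) K) := by
        funext v
        fin_cases v <;> simp [hsg, hst, Lf] <;> ring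
      rw [hXs, aeval_X_left_apply]
    set g0 := aeval st ((finSuccEquiv K 2).symm H1) with hg0
    have hfactor : f = Lf a * g0 := by
      rw [← hfh, hXdvd, map_mul]
      congr 1
      simp [hst]
    -- Step 4 : extract the degree-e homogeneous part of the cofactor
    set g1 := homogeneousComponent e g0 with hg1
    have hfactor1 : f = Lf a * g1 := by
      have hcond : ∀ j : ℕ, ((e + 1 = 1 + j) = (j = e)) := by
        intro j
        refine propext ⟨fun hyp => by omega, fun hyp => by omega⟩
      have hcalc : f = if e ∈ Finset.range (g0.totalDegree + 1) then Lf a * g1 else 0 := by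
        calc f = homogeneousComponent (e + 1) f := by
              rw [homogeneousComponent_of_mem hhom, if_pos rfl]
          _ = homogeneousComponent (e + 1) (Lf a * g0) := by rw [← hfactor]
          _ = homogeneousComponent (e + 1)
                (∑ j ∈ Finset.range (g0.totalDegree + 1),
                  Lf a * homogeneousComponent j g0) := by
              rw [← Finset.mul_sum, MvPolynomial.sum_homogeneousComponent]
          _ = ∑ j ∈ Finset.range (g0.totalDegree + 1),
                homogeneousComponent (e + 1) (Lf a * homogeneousComponent j g0) :=
              map_sum _ _ _
          _ = ∑ j ∈ Finset.range (g0.totalDegree + 1),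
                if e + 1 = 1 + j then Lf a * homogeneousComponent j g0 else 0 := by
              apply Finset.sum_congr rfl
              intro j _
              exact homogeneousComponent_of_mem
                ((Lf_isHomogeneous a).mul (homogeneousComponent_isHomogeneous j g0))
          _ = ∑ j ∈ Finset.range (g0.totalDegree + 1),
                if j = e then Lf a * homogeneousComponent j g0 else 0 := by
              apply Finset.sum_congr rfl
              intro j _
              exact if_congr (by constructor <;> (intro hyp; omega)) rfl rfl
          _ = if e ∈ Finset.range (g0.totalDegree + 1) then Lf a * g1 else 0 := by
              rw [Finset.sum_ite_eq' (Finset.range (g0.totalDegree + 1)) e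
                (fun j => Lf a * homogeneousComponent j g0)]
      by_cases hcase : e ∈ Finset.range (g0.totalDegree + 1)
      · rwa [if_pos hcase] at hcalc
      · rw [if_neg hcase] at hcalc
        have : g1 = 0 := by
          rw [hg1]
          apply homogeneousComponent_eq_zero
        -- e > totalDegree g0
          rw [Finset.mem_range] at hcase
          omega
        rw [this, mul_zero]
        exact hcalc
    -- Step 5 : induction
    have hg1hom : g1.IsHomogeneous e := homogeneousComponent_isHomogeneous e g0
    have hg1v : ∀ p ∈ S.erase i, ∀ q ∈ S.erase i, p ≠ q →
        eval (Pt (t p) (t q)) g1 = 0 := by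
      intro p hp q hq hpq
      have hpS := Finset.mem_of_mem_erase hp
      have hqS := Finset.mem_of_mem_erase hq
      have hpi : p ≠ i := Finset.ne_of_mem_erase hp
      have hqi : q ≠ i := Finset.ne_of_mem_erase hq
      have h0 := hv p hpS q hqS hpq
      rw [hfactor1, map_mul] at h0
      have hne : eval (Pt (t p) (t q)) (Lf a) ≠ 0 := by
        rw [eval_Pt_Lf]
        exact mul_ne_zero (sub_ne_zero.mpr (fun hyp => hpi (ht hyp).symm))
          (sub_ne_zero.mpr (fun hyp => hqi (ht hyp).symm))
      exact (mul_eq_zero.mp h0).resolve_left hne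
    have hg1z := IH (S.erase i) g1
      (by rw [Finset.card_erase_of_mem hiS, hcard]; omega) hg1hom hg1v
    rw [hfactor1, hg1z, mul_zero]

end NoC
namespace NoC

variable {K : Type*} [Field K]

lemma quot_smul_iff {I : Ideal (MvPolynomial (Fin 3) K)} (y f : MvPolynomial (Fin 3) K) :
    y • (Ideal.Quotient.mk I f) = 0 ↔ y * f ∈ I := by
  rw [show y • (Ideal.Quotient.mk I f) = Ideal.Quotient.mk I (y * f) from rfl,
    Ideal.Quotient.eq_zero_iff_mem]

lemma X2_in_U [Infinite K] {ι : Type*} (pts : ι → (Fin 3 → K))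
    (hpts : ∀ s, pts s 2 ≠ 0) :
    (X 2 : MvPolynomial (Fin 3) K) ∈ assComplement (⨅ s, pointIdeal (pts s)) := by
  intro P hP hmem
  obtain ⟨hprime, xq, hann⟩ := isAssociatedPrime_iff.mp hP
  obtain ⟨f, rfl⟩ := Ideal.Quotient.mk_surjective xq
  set I := ⨅ s, pointIdeal (pts s) with hI
  have hmemP : ∀ y : MvPolynomial (Fin 3) K, y ∈ P ↔ y * f ∈ I := by
    intro y
    rw [hann, Submodule.mem_colon_singleton, Submodule.mem_bot, quot_smul_iff]
  have hf : f ∉ I := by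
    intro hfI
    have h1 : (1 : MvPolynomial (Fin 3) K) ∈ P := (hmemP 1).mpr (by simpa using hfI)
    exact hprime.ne_top ((Ideal.eq_top_iff_one P).mpr h1)
  obtain ⟨s, hs⟩ : ∃ s, f ∉ pointIdeal (pts s) := by
    by_contra hcon
    push_neg at hcon
    exact hf ((Submodule.mem_iInf _).mpr hcon)
  have hX2f : X 2 * f ∈ pointIdeal (pts s) :=
    (Submodule.mem_iInf _).mp ((hmemP _).mp hmem) s
  rcases (pointIdeal_isPrime (pts s)).mem_or_mem hX2f with h | h
  · exact X2_not_mem (hpts s) h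
  · exact hs h

lemma mem_symbolicPower_of_unit_mul {R' : Type*} [CommRing R'] {I : Ideal R'}
    {u x : R'} (hu : u ∈ assComplement I) {mm : ℕ} (h : u * x ∈ I ^ mm) :
    x ∈ symbolicPower I mm := by
  rw [symbolicPower, Ideal.mem_comap]
  set A := algebraMap R' (Localization (assComplement I)) with hA
  have h1 : A u * A x ∈ Ideal.map A (I ^ mm) := by
    rw [← map_mul]
    exact Ideal.mem_map_of_mem _ h
  have hu' : IsUnit (A u) := IsLocalization.map_units _ (⟨u, hu⟩ : assComplement I)
  obtain ⟨v, hv⟩ := hu'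
  rw [← hv] at h1
  have h2 := Ideal.mul_mem_left _ (↑v⁻¹) h1
  rwa [← mul_assoc, Units.inv_mul, one_mul] at h2

end NoC
namespace NoC

variable {K : Type*} [Field K]

lemma pair_eq {a b a' b' : K} (h1 : a * b = a' * b') (h2 : a + b = a' + b') :
    (a' = a ∧ b' = b) ∨ (a' = b ∧ b' = a) := by
  have hq : (a' - a) * (a' - b) = 0 := by linear_combination h1 - a' * h2
  rcases mul_eq_zero.mp hq with h | h
  · have ha : a' = a := sub_eq_zero.mp h
    refine Or.inl ⟨ha, ?_⟩
    rw [ha] at h2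
    exact (add_left_cancel h2).symm
  · have ha : a' = b := sub_eq_zero.mp h
    refine Or.inr ⟨ha, ?_⟩
    rw [ha, add_comm b b'] at h2
    exact (add_right_cancel h2).symm

end NoC


open NoC in
/-- there is no `c < 2` such that `I^(m) ⊆ I^r` holds for every radical
ideal of points `I` in `K[P^2]` and all positive `m, r` with `m/r ≥ c`. -/
theorem no_constant_lt_two {K : Type*} [Field K] [IsAlgClosed K] :
    ¬ ∃ c : ℝ, c < 2 ∧ ∀ (n : ℕ) (p : Fin n → (Fin 3 → K)),
      (∀ i, p i ≠ 0) → (∀ i j, i ≠ j → ¬ ProjEq (p i) (p j)) →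
      ∀ m r : ℕ, 0 < m → 0 < r → c ≤ (m : ℝ) / r →
        symbolicPower (⨅ i, pointIdeal (p i)) m ≤ (⨅ i, pointIdeal (p i)) ^ r := by
  rintro ⟨c, hc2, hmain⟩
  -- numerical choices
  set d' : ℕ := max 2 ⌈2 / (2 - c)⌉₊ with hd'
  set d : ℕ := d' + 1 with hd
  have hd2' : 2 ≤ d' := le_max_left _ _
  have h2c : (0 : ℝ) < 2 - c := by linarith
  have hdR : (2 : ℝ) / (2 - c) < d := by
    have h1 : 2 / (2 - c) ≤ (⌈2 / (2 - c)⌉₊ : ℝ) := Nat.le_ceil _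
    have h2 : (⌈2 / (2 - c)⌉₊ : ℕ) ≤ d' := le_max_right _ _
    have h3 : (⌈2 / (2 - c)⌉₊ : ℝ) ≤ (d' : ℝ) := by exact_mod_cast h2
    have h4 : (d' : ℝ) < (d : ℝ) := by
      rw [hd]; push_cast; linarith
    linarith
  have hcd : c * d < 2 * d' := by
    have h3 := (div_lt_iff₀ h2c).mp hdR
    have hdd : (d' : ℝ) = (d : ℝ) - 1 := by rw [hd]; push_cast; ring
    nlinarith [h3]
  set ε : ℝ := 2 * (d' : ℝ) - c * d with hε
  have hε0 : 0 < ε := by rw [hε]; linarith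
  set KK : ℕ := max 1 ⌈c / ε⌉₊ with hKK
  have hKK1 : 1 ≤ KK := le_max_left _ _
  have hKc : c ≤ KK * ε := by
    have h1 : c / ε ≤ (⌈c / ε⌉₊ : ℝ) := Nat.le_ceil _
    have h2 : (⌈c / ε⌉₊ : ℕ) ≤ KK := le_max_right _ _
    have h3 : (⌈c / ε⌉₊ : ℝ) ≤ (KK : ℝ) := by exact_mod_cast h2
    calc c = c / ε * ε := by field_simp
      _ ≤ KK * ε := mul_le_mul_of_nonneg_right (le_trans h1 h3) hε0.le
  set k : ℕ := d' * KK with hk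
  set r : ℕ := d * KK + 1 with hr
  set m : ℕ := 2 * k with hm
  have hk0 : 0 < k := by
    rw [hk]; exact Nat.mul_pos (by omega) (by omega)
  have hm0 : 0 < m := by omega
  have hr0 : 0 < r := by omega
  have hratio : c ≤ (m : ℝ) / (r : ℝ) := by
    rw [le_div_iff₀ (by exact_mod_cast hr0 : (0 : ℝ) < (r : ℕ))]
    have hcast : (m : ℝ) = 2 * ((d' : ℝ) * KK) := by rw [hm, hk]; push_cast; ring
    have hcast2 : (r : ℝ) = (d : ℝ) * KK + 1 := by rw [hr]; push_cast; ring
    rw [hcast, hcast2]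
    have h5 : c * ((d : ℝ) * KK + 1) = c * d * KK + c := by ring
    rw [h5]
    have h6 : c * d * KK + c ≤ c * d * KK + KK * ε := by linarith
    have h7 : c * (d : ℝ) * KK + KK * ε = 2 * ((d' : ℝ) * KK) := by rw [hε]; ring
    linarith
  have hdk : d * k < d' * r := by
    have hlin : d' * r = d * k + d' := by rw [hr, hk, hd]; ring
    omega
  -- the star configuration
  set t : Fin d → K := fun i => (Infinite.natEmbedding K) i.val with htdef
  have ht : Function.Injective t := by
    intro i j hij
    exact Fin.val_injective ((Infinite.natEmbedding K).injective hij)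
  set n : ℕ := Fintype.card {q : Fin d × Fin d // q.1 < q.2} with hn
  set eqv : Fin n ≃ {q : Fin d × Fin d // q.1 < q.2} :=
    (Fintype.equivFin {q : Fin d × Fin d // q.1 < q.2}).symm with heqv
  set pts : Fin n → (Fin 3 → K) :=
    fun i => Pt (t (eqv i).1.1) (t (eqv i).1.2) with hptsdef
  have hPt2 : ∀ a b : K, Pt a b 2 = 1 := fun a b => rfl
  have hnz : ∀ i, pts i ≠ 0 := by
    intro i h
    exact one_ne_zero (α := K) (congrFun h 2)
  have hdist : ∀ i j, i ≠ j → ¬ ProjEq (pts i) (pts j) := by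
    intro i j hij ⟨cc, hcc0, hccE⟩
    have h2 := congrFun hccE 2
    have hcc1 : cc = 1 := by
      have h2' : (1 : K) = cc := by
        simpa [hptsdef, hPt2, Pi.smul_apply, smul_eq_mul] using h2
      exact h2'.symm
    rw [hcc1, one_smul] at hccE
    have h0 := congrFun hccE 0
    have h1 := congrFun hccE 1
    simp only [hptsdef, Pt, Matrix.cons_val_zero, Matrix.cons_val_one, Matrix.head_cons]
      at h0 h1
    have hsum : t (eqv i).1.1 + t (eqv i).1.2 = t (eqv j).1.1 + t (eqv j).1.2 :=
      neg_injective h1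
    rcases pair_eq h0.symm hsum.symm with ⟨ha, hb⟩ | ⟨ha, hb⟩
    · have e1 : (eqv i).1.1 = (eqv j).1.1 := ht ha
      have e2 : (eqv i).1.2 = (eqv j).1.2 := ht hb
      exact hij (eqv.injective (Subtype.ext (Prod.ext e1 e2)))
    · have e1 : (eqv i).1.1 = (eqv j).1.2 := ht ha
      have e2 : (eqv i).1.2 = (eqv j).1.1 := ht hb
      have hlt1 := (eqv i).2
      have hlt2 := (eqv j).2
      rw [e1, e2] at hlt1
      exact absurd (lt_trans hlt1 hlt2) (lt_irrefl _)
  set F : MvPolynomial (Fin 3) K := ∏ i, Lf (t i) with hF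
  set I : Ideal (MvPolynomial (Fin 3) K) := ⨅ i, pointIdeal (pts i) with hIdef
  have hIeq : I = ⨅ s : {q : Fin d × Fin d // q.1 < q.2},
      pointIdeal (Pt (t s.1.1) (t s.1.2)) := by
    rw [hIdef]
    exact Equiv.iInf_comp (g := fun s : {q : Fin d × Fin d // q.1 < q.2} =>
      pointIdeal (Pt (t s.1.1) (t s.1.2))) eqv
  -- F belongs to the square of each point ideal
  have hFJ2 : ∀ s : {q : Fin d × Fin d // q.1 < q.2},
      F ∈ (pointIdeal (Pt (t s.1.1) (t s.1.2))) ^ 2 := by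
    intro s
    classical
    have hne : s.1.2 ∈ (Finset.univ.erase s.1.1) :=
      Finset.mem_erase.mpr ⟨s.2.ne', Finset.mem_univ _⟩
    have hstep : F = Lf (t s.1.1) * (Lf (t s.1.2) *
        ∏ i ∈ (Finset.univ.erase s.1.1).erase s.1.2, Lf (t i)) := by
      rw [hF, ← Finset.mul_prod_erase _ (fun i => Lf (t i)) (Finset.mem_univ s.1.1),
        ← Finset.mul_prod_erase _ (fun i => Lf (t i)) hne]
    rw [hstep, pow_two]
    exact Ideal.mul_mem_mul (Lf_mem _ _) (Ideal.mul_mem_right _ _ (Lf_mem' _ _))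
  -- pairwise comaximality up to X 2
  have hcomax : ∀ s q' : {q : Fin d × Fin d // q.1 < q.2}, s ≠ q' →
      (X 2 : MvPolynomial (Fin 3) K) ∈
        pointIdeal (Pt (t s.1.1) (t s.1.2)) ⊔ pointIdeal (Pt (t q'.1.1) (t q'.1.2)) := by
    intro s q' hsq
    have hpairs_ne : s.1 ≠ q'.1 := fun h => hsq (Subtype.ext h)
    obtain ⟨cx, hcxor, hcx1, hcx2⟩ :
        ∃ cx : Fin d, (cx = q'.1.1 ∨ cx = q'.1.2) ∧ cx ≠ s.1.1 ∧ cx ≠ s.1.2 := by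
      rcases eq_or_ne q'.1.1 s.1.1 with e1 | e1
      · rcases eq_or_ne q'.1.2 s.1.2 with e2 | e2
        · exact absurd (Prod.ext e1 e2).symm hpairs_ne
        · refine ⟨q'.1.2, Or.inr rfl, fun heq => ?_, e2⟩
          have hq2 := q'.2
          rw [heq, ← e1] at hq2
          exact lt_irrefl _ hq2
      · rcases eq_or_ne q'.1.1 s.1.2 with e2 | e2
        · refine ⟨q'.1.2, Or.inr rfl, fun heq => ?_, fun heq => ?_⟩
          · have h3 : s.1.1 < q'.1.2 :=
              lt_trans (lt_of_lt_of_le s.2 (le_of_eq e2.symm)) q'.2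
            rw [heq] at h3
            exact lt_irrefl _ h3
          · have hq2 := q'.2
            rw [heq, ← e2] at hq2
            exact lt_irrefl _ hq2
        · exact ⟨q'.1.1, Or.inl rfl, e1, e2⟩
    have hx2 := X2_eq_comb (K := K) (ht.ne s.2.ne) (ht.ne (Ne.symm hcx1))
      (ht.ne (Ne.symm hcx2))
    rw [hx2]
    refine Submodule.add_mem _ (Submodule.mem_sup_left ?_) (Submodule.mem_sup_right ?_)
    · exact Ideal.add_mem _ (Ideal.mul_mem_left _ _ (Lf_mem _ _))
        (Ideal.mul_mem_left _ _ (Lf_mem' _ _))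
    · rcases hcxor with h | h
      · rw [h]
        exact Ideal.mul_mem_left _ _ (Lf_mem _ _)
      · rw [h]
        exact Ideal.mul_mem_left _ _ (Lf_mem' _ _)
  -- symbolic power membership
  have hsym : F ^ k ∈ symbolicPower I m := by
    classical
    have hcomax' : ∀ s ∈ (Finset.univ : Finset {q : Fin d × Fin d // q.1 < q.2}),
        ∀ q' ∈ (Finset.univ : Finset {q : Fin d × Fin d // q.1 < q.2}), s ≠ q' →
        (X 2 ^ (m + m) : MvPolynomial (Fin 3) K) ∈
          (pointIdeal (Pt (t s.1.1) (t s.1.2))) ^ m ⊔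
            (pointIdeal (Pt (t q'.1.1) (t q'.1.2))) ^ m :=
      fun s _ q' _ hne => crt_pow (hcomax s q' hne) m
    have hFm : ∀ s ∈ (Finset.univ : Finset {q : Fin d × Fin d // q.1 < q.2}),
        F ^ k ∈ (fun s : {q : Fin d × Fin d // q.1 < q.2} =>
          (pointIdeal (Pt (t s.1.1) (t s.1.2))) ^ m) s := by
      intro s _
      have h1 := Ideal.pow_mem_pow (hFJ2 s) k
      rw [← pow_mul] at h1
      rwa [hm]
    obtain ⟨M, hM⟩ := crt_exists
      (fun s : {q : Fin d × Fin d // q.1 < q.2} =>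
        (pointIdeal (Pt (t s.1.1) (t s.1.2))) ^ m)
      (X 2 ^ (m + m)) (F ^ k) Finset.univ hcomax' hFm
    have hprod : ∏ s ∈ (Finset.univ : Finset {q : Fin d × Fin d // q.1 < q.2}),
        (pointIdeal (Pt (t s.1.1) (t s.1.2))) ^ m ≤ I ^ m := by
      rw [Finset.prod_pow]
      apply Ideal.pow_right_mono
      rw [hIeq]
      exact le_trans Ideal.prod_le_inf (le_iInf fun s => Finset.inf_le (Finset.mem_univ s))
    have hX2U : (X 2 : MvPolynomial (Fin 3) K) ∈ assComplement I := by
      rw [hIdef]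
      exact X2_in_U pts fun s => one_ne_zero
    have hUmem : ((X 2 : MvPolynomial (Fin 3) K) ^ (m + m)) ^ M ∈ assComplement I :=
      pow_mem (pow_mem hX2U _) _
    exact mem_symbolicPower_of_unit_mul hUmem (hprod hM)
  -- apply the assumed uniform containment
  have hcont := hmain n pts hnz hdist m r hm0 hr0 hratio
  rw [← hIdef] at hcont
  have hFk_pow : F ^ k ∈ I ^ r := hcont hsym
  -- non-containment via degrees
  have hlow : I ≤ lowDeg d' := by
    intro f hf
    rw [mem_lowDeg]
    intro mm hmm
    by_contra hcon
    push_neg at hcon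
    classical
    obtain ⟨S, hSsub, hScard⟩ := Finset.exists_subset_card_eq
      (s := (Finset.univ : Finset (Fin d))) (n := Finsupp.degree mm + 2)
      (by rw [Finset.card_univ, Fintype.card_fin]; omega)
    have hfmem : ∀ p q : Fin d, p < q → f ∈ pointIdeal (Pt (t p) (t q)) := by
      intro p q hpq
      have hf' : f ∈ ⨅ s : {q : Fin d × Fin d // q.1 < q.2},
          pointIdeal (Pt (t s.1.1) (t s.1.2)) := hIeq ▸ hf
      exact (Submodule.mem_iInf _).mp hf' ⟨(p, q), hpq⟩
    have hvan : ∀ i ∈ S, ∀ j ∈ S, i ≠ j →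
        eval (Pt (t i) (t j)) (homogeneousComponent (Finsupp.degree mm) f) = 0 := by
      intro i hi j hj hij
      rcases lt_or_gt_of_ne hij with hlt | hgt
      · exact eval_homogeneousComponent_zero (hfmem i j hlt) _
      · rw [Pt_comm]
        exact eval_homogeneousComponent_zero (hfmem j i hgt) _
    have hz := vanish ht (Finsupp.degree mm) S _ hScard
      (homogeneousComponent_isHomogeneous _ _) hvan
    have hcoeff : coeff mm (homogeneousComponent (Finsupp.degree mm) f) = coeff mm f := by
      rw [coeff_homogeneousComponent, if_pos rfl]
    rw [hz, MvPolynomial.coeff_zero] at hcoeff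
    exact (MvPolynomial.mem_support_iff.mp hmm) hcoeff.symm
  have hFk_low : F ^ k ∈ lowDeg (d' * r) :=
    lowDeg_pow d' r (Ideal.pow_right_mono hlow r hFk_pow)
  have hzero := chi_coeff_eq_zero hFk_low hdk
  rw [hF, chi_F_pow t k, Polynomial.coeff_X_pow, if_pos rfl] at hzero
  exact one_ne_zero hzero
end
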